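/- arXiv:2311.05715 — 3 statements merged into one kernel-verified Lean document; each statement's English description precedes it below -/
import Mathlib

section
/- Let ψ ∈ C¹([a,b]) with ψ'(t) > 0 for all t ∈ [a,b], let p ∈ ℕ, α ∈ (0,1], and let f be a piecewise continuous function on [a,b]. Then for every t ∈ [a,b], the iterated ψ-Riemann–Liouville integral of order (p+1)α of f equals the generalized ψ-convolution of the kernel s ↦ (ψ(s) − ψ(a))^{pα+α−1}/Γ(pα+α) with f; that is, I_a^{(p+1)α,ψ} f(t) = ∫_a^t ((ψ(s) − ψ(a))^{pα+α−1}/Γ(pα+α)) · f(ψ^{−1}(ψ(t) + ψ(a) − ψ(s))) · ψ'(s) ds. -/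
open MeasureTheory intervalIntegral Real

/-- The left ψ-Riemann–Liouville fractional integral of order `α` of `f`, with base point `a`. -/
noncomputable def psiInt (ψ : ℝ → ℝ) (α a : ℝ) (f : ℝ → ℝ) (t : ℝ) : ℝ :=
  (1 / Real.Gamma α) * ∫ s in a..t, deriv ψ s * (ψ t - ψ s) ^ (α - 1) * f s

/-- `f` is piecewise continuous on `[a, b]`: continuous off a finite set of points. -/
def PiecewiseContinuousOn (f : ℝ → ℝ) (a b : ℝ) : Prop :=
  ∃ S : Finset ℝ, ContinuousOn f (Set.Icc a b \ S)

/-- the ψ-fractional integral of order `(p+1)α` as a generalized ψ-convolution. -/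
theorem psiInt_eq_psiConvolution (a b : ℝ) (hab : a < b) (ψ ψinv : ℝ → ℝ)
    (hψ : ContDiffOn ℝ 1 ψ (Set.Icc a b))
    (hψ' : ∀ t ∈ Set.Icc a b, 0 < deriv ψ t)
    (hinv : ∀ x ∈ Set.Icc a b, ψinv (ψ x) = x)
    (hinv' : ∀ y ∈ Set.Icc (ψ a) (ψ b), ψ (ψinv y) = y)
    (p : ℕ) (α : ℝ) (hα : α ∈ Set.Ioc (0 : ℝ) 1)
    (f : ℝ → ℝ) (hf : PiecewiseContinuousOn f a b) :
    ∀ t ∈ Set.Icc a b,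
      psiInt ψ ((p + 1 : ℝ) * α) a f t =
        ∫ s in a..t,
          (ψ s - ψ a) ^ ((p : ℝ) * α + α - 1) / Real.Gamma ((p : ℝ) * α + α) *
            f (ψinv (ψ t + ψ a - ψ s)) * deriv ψ s := by
  intro t ht
  have hat : a ≤ t := ht.1
  set β : ℝ := (p : ℝ) * α + α with hβdef
  have hβ2 : ((p : ℝ) + 1) * α = β := by rw [hβdef]; ring
  have hmono : StrictMonoOn ψ (Set.Icc a b) :=
    strictMonoOn_of_deriv_pos (convex_Icc a b) hψ.continuousOn
      (fun x hx => hψ' x (interior_subset hx))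
  have hψat : ψ a ≤ ψ t :=
    hmono.monotoneOn (Set.left_mem_Icc.2 hab.le) ht hat
  have hsub : Set.Ioo a t ⊆ Set.Icc a b := fun x hx => ⟨hx.1.le, hx.2.le.trans ht.2⟩
  have hsub' : Set.Ioo a t ⊆ Set.Ioo a b := fun x hx => ⟨hx.1, lt_of_lt_of_le hx.2 ht.2⟩
  have hderiv : ∀ x ∈ Set.Ioo a t, HasDerivWithinAt ψ (deriv ψ x) (Set.Ioo a t) x := fun x hx =>
    ((((hψ.differentiableOn one_ne_zero) x (hsub hx)).differentiableAt
      (Icc_mem_nhds (hsub' hx).1 (hsub' hx).2)).hasDerivAt).hasDerivWithinAt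
  have hinj : Set.InjOn ψ (Set.Ioo a t) := (hmono.injOn).mono hsub
  have himg : ψ '' Set.Ioo a t = Set.Ioo (ψ a) (ψ t) := by
    apply Set.Subset.antisymm
    · rintro _ ⟨x, hx, rfl⟩
      exact ⟨hmono (Set.left_mem_Icc.2 hab.le) (hsub hx) hx.1, hmono (hsub hx) ht hx.2⟩
    · exact intermediate_value_Ioo hat (hψ.continuousOn.mono (Set.Icc_subset_Icc le_rfl ht.2))
  have key : ∀ g : ℝ → ℝ, (∫ u in Set.Ioo (ψ a) (ψ t), g u)
      = ∫ x in Set.Ioo a t, deriv ψ x * g (ψ x) := by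
    intro g
    rw [← himg, integral_image_eq_integral_abs_deriv_smul measurableSet_Ioo hderiv hinj g]
    exact setIntegral_congr_fun measurableSet_Ioo fun x hx => by
      rw [abs_of_pos (hψ' x (hsub hx)), smul_eq_mul]
  have hL : (∫ s in a..t, deriv ψ s * (ψ t - ψ s) ^ (β - 1) * f s)
      = ∫ u in Set.Ioo (ψ a) (ψ t), (ψ t - u) ^ (β - 1) * f (ψinv u) := by
    rw [key, intervalIntegral.integral_of_le hat, integral_Ioc_eq_integral_Ioo]
    refine setIntegral_congr_fun measurableSet_Ioo fun x hx => ?_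
    rw [hinv x (hsub hx), mul_assoc]
  have hR : (∫ s in a..t, (ψ s - ψ a) ^ (β - 1) / Real.Gamma β *
        f (ψinv (ψ t + ψ a - ψ s)) * deriv ψ s)
      = ∫ u in Set.Ioo (ψ a) (ψ t),
          (u - ψ a) ^ (β - 1) / Real.Gamma β * f (ψinv (ψ t + ψ a - u)) := by
    rw [key, intervalIntegral.integral_of_le hat, integral_Ioc_eq_integral_Ioo]
    exact setIntegral_congr_fun measurableSet_Ioo fun x hx => by ring
  have hrefl : (∫ u in Set.Ioo (ψ a) (ψ t),
        (u - ψ a) ^ (β - 1) / Real.Gamma β * f (ψinv (ψ t + ψ a - u)))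
      = 1 / Real.Gamma β * ∫ u in Set.Ioo (ψ a) (ψ t), (ψ t - u) ^ (β - 1) * f (ψinv u) := by
    rw [← integral_Ioc_eq_integral_Ioo, ← intervalIntegral.integral_of_le hψat]
    have step1 : (∫ u in (ψ a)..(ψ t),
          (u - ψ a) ^ (β - 1) / Real.Gamma β * f (ψinv (ψ t + ψ a - u)))
        = ∫ u in (ψ a)..(ψ t),
          (fun v => (ψ t - v) ^ (β - 1) / Real.Gamma β * f (ψinv v)) ((ψ t + ψ a) - u) :=
      intervalIntegral.integral_congr fun u _ => by
        simp only [show ψ t - (ψ t + ψ a - u) = u - ψ a from by ring]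
    rw [step1, intervalIntegral.integral_comp_sub_left
      (fun v => (ψ t - v) ^ (β - 1) / Real.Gamma β * f (ψinv v)) (ψ t + ψ a),
      show ψ t + ψ a - ψ t = ψ a from by ring, show ψ t + ψ a - ψ a = ψ t from by ring,
      intervalIntegral.integral_of_le hψat, integral_Ioc_eq_integral_Ioo,
      ← MeasureTheory.integral_const_mul]
    exact setIntegral_congr_fun measurableSet_Ioo fun u hu => by ring
  simp only [psiInt, hβ2]
  rw [hL, hR, hrefl]
end

section
/- Let ψ ∈ C¹([a,b]) with ψ'(t) > 0 on [a,b], let α ∈ (0,1), and let f ∈ C¹([a,b]). Then the ψ-Riemann–Liouville fractional integral of order α of the ψ-Caputo fractional derivative of order α of f recovers f up to its initial value: I_a^{α,ψ} ( ^C D_a^{α,ψ} f )(t) = f(t) − f(a) for every t ∈ [a,b]. -/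
open MeasureTheory intervalIntegral Real

/-- The ψ-Caputo fractional derivative of order `α ∈ (0,1)` of `f`, with base point `a`
(for `α = 1` it is the ordinary derivative). -/
noncomputable def psiCaputo (ψ : ℝ → ℝ) (α a : ℝ) (f : ℝ → ℝ) (t : ℝ) : ℝ :=
  if α = 1 then deriv f t
  else (1 / Real.Gamma (1 - α)) * ∫ s in a..t, (ψ t - ψ s) ^ (-α) * deriv f s

lemma meas_rpow_const (c : ℝ) : Measurable (fun x : ℝ => x ^ c) := by
  have h : (fun x : ℝ => x ^ c) = fun x =>
      if 0 < x then Real.exp (Real.log x * c)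
      else if x = 0 then (if c = 0 then 1 else 0)
      else Real.exp (Real.log x * c) * Real.cos (c * Real.pi) := by
    funext x
    rcases lt_trichotomy x 0 with hx | hx | hx
    · rw [if_neg (by linarith), if_neg hx.ne, Real.rpow_def_of_neg hx]
    · subst hx
      rw [if_neg (lt_irrefl 0), if_pos rfl]
      split_ifs with hc
      · simp [hc]
      · exact Real.zero_rpow hc
    · rw [if_pos hx, Real.rpow_def_of_pos hx]
  rw [h]
  refine Measurable.ite ?_ ?_ (Measurable.ite ?_ measurable_const ?_)
  · exact measurableSet_Ioi
  · exact Real.measurable_exp.comp (Real.measurable_log.mul_const c)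
  · exact measurableSet_eq
  · exact (Real.measurable_exp.comp (Real.measurable_log.mul_const c)).mul_const _

lemma contOn_left {d p : ℝ} {s : Set ℝ} (hs : ∀ x ∈ s, x ≠ d) :
    ContinuousOn (fun x : ℝ => (d - x) ^ p) s := by
  apply ContinuousOn.rpow_const (by fun_prop)
  intro x hx
  exact Or.inl (sub_ne_zero.2 (Ne.symm (hs x hx)))

lemma contOn_right {c p : ℝ} {s : Set ℝ} (hs : ∀ x ∈ s, x ≠ c) :
    ContinuousOn (fun x : ℝ => (x - c) ^ p) s := by
  apply ContinuousOn.rpow_const (by fun_prop)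
  intro x hx
  exact Or.inl (sub_ne_zero.2 (hs x hx))

lemma beta_integrable {c d p q : ℝ} (hcd : c < d) (hp : -1 < p) (hq : -1 < q) :
    IntegrableOn (fun x => (d - x) ^ p * (x - c) ^ q) (Set.Ioo c d) := by
  set m := (c + d) / 2 with hm
  have hcm : c < m := by simp only [hm]; linarith
  have hmd : m < d := by simp only [hm]; linarith
  have hcont : ContinuousOn (fun x => (d - x) ^ p * (x - c) ^ q) (Set.Ioo c d) :=
    (contOn_left (fun x hx => hx.2.ne)).mul (contOn_right (fun x hx => hx.1.ne'))
  have h1 : IntegrableOn (fun x => (x - c) ^ q) (Set.Ioo c m) := by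
    have := (intervalIntegrable_rpow' (a := 0) (b := m - c) hq).comp_sub_right c
    simp only [zero_add, sub_add_cancel] at this
    exact this.1.mono_set Set.Ioo_subset_Ioc_self
  have h2 : IntegrableOn (fun x => (d - x) ^ p) (Set.Ico m d) := by
    have := (intervalIntegrable_rpow' (a := 0) (b := d - m) hp).comp_sub_left d
    simp only [sub_zero, sub_sub_cancel] at this
    rw [integrableOn_Ico_iff_integrableOn_Ioo]
    exact this.symm.1.mono_set Set.Ioo_subset_Ioc_self
  have hsplit : Set.Ioo c m ∪ Set.Ico m d = Set.Ioo c d :=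
    Set.Ioo_union_Ico_eq_Ioo hcm hmd.le
  rw [← hsplit]
  refine MeasureTheory.IntegrableOn.union ?_ ?_
  · obtain ⟨C, hC⟩ : ∃ C, ∀ x ∈ Set.Icc c m, |(d - x) ^ p| ≤ C := by
      rcases (isCompact_Icc (a := c) (b := m)).exists_bound_of_continuousOn
        (contOn_left (fun x hx => by rintro rfl; exact absurd hx.2 (not_le.2 hmd)))
        with ⟨C, hC⟩
      exact ⟨C, fun x hx => by simpa [Real.norm_eq_abs] using hC x hx⟩
    refine Integrable.mono' (h1.const_mul C) ?_ ?_
    · exact (hcont.mono (fun x hx => ⟨hx.1, hx.2.trans hmd⟩)).aestronglyMeasurable measurableSet_Ioo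
    · filter_upwards [ae_restrict_mem measurableSet_Ioo] with x hx
      rw [norm_mul]
      have h0 : 0 ≤ (x - c) ^ q := Real.rpow_nonneg (by linarith [hx.1]) _
      calc ‖(d - x) ^ p‖ * ‖(x - c) ^ q‖ ≤ C * ‖(x - c) ^ q‖ :=
            mul_le_mul_of_nonneg_right (le_of_eq_of_le (Real.norm_eq_abs _) (hC x ⟨hx.1.le, hx.2.le⟩)) (norm_nonneg _)
        _ = C * (x - c) ^ q := by rw [Real.norm_eq_abs, abs_of_nonneg h0]
  · obtain ⟨C, hC⟩ : ∃ C, ∀ x ∈ Set.Icc m d, |(x - c) ^ q| ≤ C := by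
      rcases (isCompact_Icc (a := m) (b := d)).exists_bound_of_continuousOn
        (contOn_right (fun x hx => by rintro rfl; exact absurd hx.1 (not_le.2 hcm)))
        with ⟨C, hC⟩
      exact ⟨C, fun x hx => by simpa [Real.norm_eq_abs] using hC x hx⟩
    refine Integrable.mono' (h2.const_mul C) ?_ ?_
    · exact (hcont.mono (fun x hx => ⟨hcm.trans_le hx.1, hx.2⟩)).aestronglyMeasurable measurableSet_Ico
    · filter_upwards [ae_restrict_mem measurableSet_Ico] with x hx
      rw [norm_mul]
      have h0 : 0 ≤ (d - x) ^ p := Real.rpow_nonneg (by linarith [hx.2]) _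
      calc ‖(d - x) ^ p‖ * ‖(x - c) ^ q‖ ≤ ‖(d - x) ^ p‖ * C :=
            mul_le_mul_of_nonneg_left (le_of_eq_of_le (Real.norm_eq_abs _) (hC x ⟨hx.1, hx.2.le⟩)) (norm_nonneg _)
        _ = C * (d - x) ^ p := by rw [Real.norm_eq_abs, abs_of_nonneg h0]; ring

lemma real_beta {p q : ℝ} (hp : 0 < p) (hq : 0 < q) :
    ∫ x in (0:ℝ)..1, x ^ (p - 1) * (1 - x) ^ (q - 1) =
      Real.Gamma p * Real.Gamma q / Real.Gamma (p + q) := by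
  have hcoe : Complex.betaIntegral p q =
      ((∫ x in (0:ℝ)..1, x ^ (p - 1) * (1 - x) ^ (q - 1) : ℝ) : ℂ) := by
    rw [← intervalIntegral.integral_ofReal, Complex.betaIntegral]
    apply intervalIntegral.integral_congr
    intro x hx
    rw [Set.uIcc_of_le (by norm_num : (0:ℝ) ≤ 1)] at hx
    push_cast
    rw [Complex.ofReal_cpow hx.1 (p-1), Complex.ofReal_cpow (by linarith [hx.2] : (0:ℝ) ≤ 1 - x) (q-1)]
    push_cast
    ring
  have h := Complex.Gamma_mul_Gamma_eq_betaIntegral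
    (s := (p:ℂ)) (t := (q:ℂ)) (by simpa using hp) (by simpa using hq)
  rw [hcoe, ← Complex.ofReal_add, Complex.Gamma_ofReal, Complex.Gamma_ofReal,
    Complex.Gamma_ofReal, ← Complex.ofReal_mul, ← Complex.ofReal_mul] at h
  have h' := Complex.ofReal_injective h
  have hG : Real.Gamma (p + q) ≠ 0 := (Real.Gamma_pos_of_pos (by linarith)).ne'
  field_simp
  linarith [h']

lemma beta_value {c d α : ℝ} (hcd : c < d) (h0 : 0 < α) (h1 : α < 1) :
    ∫ x in Set.Ioo c d, (d - x) ^ (α - 1) * (x - c) ^ (-α) =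
      Real.Gamma α * Real.Gamma (1 - α) := by
  set k := d - c with hk'
  have hk : 0 < k := sub_pos.2 hcd
  have base : ∫ y in (0:ℝ)..1, y ^ (-α) * (1 - y) ^ (α - 1) =
      Real.Gamma (1 - α) * Real.Gamma α := by
    have := real_beta (p := 1 - α) (q := α) (by linarith) h0
    rw [show (1 - α) - 1 = -α by ring, show (1 - α) + α = 1 by ring,
      Real.Gamma_one, div_one] at this
    exact this
  have step1 : ∫ x in Set.Ioo c d, (d - x) ^ (α - 1) * (x - c) ^ (-α) =
      ∫ x in c..d, (d - x) ^ (α - 1) * (x - c) ^ (-α) := by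
    rw [intervalIntegral.integral_of_le hcd.le, MeasureTheory.integral_Ioc_eq_integral_Ioo]
  have sub := intervalIntegral.integral_comp_mul_add (a := 0) (b := 1)
    (fun x => (d - x) ^ (α - 1) * (x - c) ^ (-α)) hk.ne' c
  simp only [mul_zero, zero_add, mul_one] at sub
  rw [show k + c = d by rw [hk']; ring] at sub
  have congr1 : ∫ y in (0:ℝ)..1, (d - (k * y + c)) ^ (α - 1) * ((k * y + c) - c) ^ (-α)
      = ∫ y in (0:ℝ)..1, k⁻¹ * (y ^ (-α) * (1 - y) ^ (α - 1)) := by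
    apply intervalIntegral.integral_congr
    intro y hy
    rw [Set.uIcc_of_le (by norm_num : (0:ℝ) ≤ 1)] at hy
    show (d - (k * y + c)) ^ (α - 1) * (k * y + c - c) ^ (-α) = k⁻¹ * (y ^ (-α) * (1 - y) ^ (α - 1))
    have e1 : d - (k * y + c) = k * (1 - y) := by rw [hk']; ring
    have e2 : k * y + c - c = k * y := by ring
    rw [e1, e2, Real.mul_rpow hk.le (by linarith [hy.2]), Real.mul_rpow hk.le hy.1]
    have e3 : k ^ (α - 1) * k ^ (-α) = k⁻¹ := by
      rw [← Real.rpow_add hk, show α - 1 + -α = -1 by ring, Real.rpow_neg_one]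
    calc k ^ (α - 1) * (1 - y) ^ (α - 1) * (k ^ (-α) * y ^ (-α))
        = (k ^ (α - 1) * k ^ (-α)) * (y ^ (-α) * (1 - y) ^ (α - 1)) := by ring
      _ = k⁻¹ * (y ^ (-α) * (1 - y) ^ (α - 1)) := by rw [e3]
  rw [step1]
  have inv : (k:ℝ) • (k⁻¹ • ∫ x in c..d, (d - x) ^ (α - 1) * (x - c) ^ (-α))
      = ∫ x in c..d, (d - x) ^ (α - 1) * (x - c) ^ (-α) := by
    rw [smul_smul, mul_inv_cancel₀ hk.ne', one_smul]
  rw [← inv, ← sub, congr1, intervalIntegral.integral_const_mul, base, smul_eq_mul]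
  field_simp

/-- `I_a^{α,ψ} (^C D_a^{α,ψ} f)(t) = f(t) − f(a)`. -/
theorem psiInt_psiCaputo (a b : ℝ) (hab : a < b) (ψ : ℝ → ℝ)
    (hψ : ContDiffOn ℝ 1 ψ (Set.Icc a b))
    (hψ' : ∀ t ∈ Set.Icc a b, 0 < deriv ψ t)
    (α : ℝ) (hα : α ∈ Set.Ioo (0 : ℝ) 1)
    (f : ℝ → ℝ) (hf : ContDiffOn ℝ 1 f (Set.Icc a b)) :
    ∀ t ∈ Set.Icc a b,
      psiInt ψ α a (psiCaputo ψ α a f) t = f t - f a := by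
  intro t ht
  rcases eq_or_lt_of_le ht.1 with rfl | hat
  · simp [psiInt]
  have htb : t ≤ b := ht.2
  have hα0 : 0 < α := hα.1
  have hα1 : α < 1 := hα.2
  set w := deriv ψ with hw
  set g := deriv f with hg
  have hψdiff : ∀ x ∈ Set.Ioo a b, HasDerivAt ψ (w x) x := by
    intro x hx
    have h1 : DifferentiableWithinAt ℝ ψ (Set.Icc a b) x :=
      (hψ.differentiableOn one_ne_zero) x (Set.Ioo_subset_Icc_self hx)
    exact (h1.differentiableAt (Icc_mem_nhds hx.1 hx.2)).hasDerivAt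
  have hfdiff : ∀ x ∈ Set.Ioo a b, HasDerivAt f (g x) x := by
    intro x hx
    have h1 : DifferentiableWithinAt ℝ f (Set.Icc a b) x :=
      (hf.differentiableOn one_ne_zero) x (Set.Ioo_subset_Icc_self hx)
    exact (h1.differentiableAt (Icc_mem_nhds hx.1 hx.2)).hasDerivAt
  have hψcont : ContinuousOn ψ (Set.Icc a b) := hψ.continuousOn
  have hmono : StrictMonoOn ψ (Set.Icc a b) := by
    apply strictMonoOn_of_deriv_pos (convex_Icc a b) hψcont
    intro x hx
    rw [interior_Icc] at hx
    exact hψ' x (Set.Ioo_subset_Icc_self hx)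
  obtain ⟨M, hM⟩ : ∃ M, ∀ x ∈ Set.Ioo a b, |g x| ≤ M := by
    obtain ⟨M, hM⟩ := (isCompact_Icc (a := a) (b := b)).exists_bound_of_continuousOn
      (hf.continuousOn_derivWithin (uniqueDiffOn_Icc hab) le_rfl)
    refine ⟨M, fun x hx => ?_⟩
    have hdw : derivWithin f (Set.Icc a b) x = g x :=
      derivWithin_of_mem_nhds (Icc_mem_nhds hx.1 hx.2)
    have := hM x (Set.Ioo_subset_Icc_self hx)
    rwa [Real.norm_eq_abs, hdw] at this
  have hM0 : 0 ≤ M := le_trans (abs_nonneg _) (hM ((a+b)/2) ⟨by linarith, by linarith⟩)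
  set B := Real.Gamma α * Real.Gamma (1 - α) with hB
  have hΓ1 : (0:ℝ) < Real.Gamma α := Real.Gamma_pos_of_pos hα0
  have hΓ2 : (0:ℝ) < Real.Gamma (1 - α) := Real.Gamma_pos_of_pos (by linarith)
  have hBpos : 0 < B := mul_pos hΓ1 hΓ2
  set K : ℝ → ℝ → ℝ := fun s u => w s * ((ψ t - ψ s) ^ (α - 1) * (ψ s - ψ u) ^ (-α)) with hK
  set T : Set (ℝ × ℝ) := {p | p.1 ∈ Set.Ioo a t ∧ p.2 ∈ Set.Ioo a p.1} with hT
  set H : ℝ × ℝ → ℝ := T.indicator (fun p => K p.1 p.2 * g p.2) with hH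
  have hTmeas : MeasurableSet T := by
    have : T = {p : ℝ × ℝ | a < p.1} ∩ {p : ℝ × ℝ | p.1 < t} ∩
        ({p : ℝ × ℝ | a < p.2} ∩ {p : ℝ × ℝ | p.2 < p.1}) := by
      ext p
      simp only [hT, Set.mem_setOf_eq, Set.mem_inter_iff, Set.mem_Ioo]
    rw [this]
    exact (((measurableSet_lt measurable_const measurable_fst).inter
      (measurableSet_lt measurable_fst measurable_const)).inter
      ((measurableSet_lt measurable_const measurable_snd).inter
      (measurableSet_lt measurable_snd measurable_fst)))
  -- per-u facts
  have hsub : ∀ u ∈ Set.Ioo a t, Set.Ioo u t ⊆ Set.Ioo a b := by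
    intro u hu s hs
    simp only [Set.mem_Ioo] at hs ⊢
    exact ⟨hu.1.trans hs.1, lt_of_lt_of_le hs.2 htb⟩
  have hwpos : ∀ x ∈ Set.Ioo a b, 0 < w x := fun x hx => hψ' x (Set.Ioo_subset_Icc_self hx)
  have hder : ∀ u ∈ Set.Ioo a t, ∀ s ∈ Set.Ioo u t, HasDerivWithinAt ψ (w s) (Set.Ioo u t) s :=
    fun u hu s hs => (hψdiff s (hsub u hu hs)).hasDerivWithinAt
  have hinj : ∀ u ∈ Set.Ioo a t, Set.InjOn ψ (Set.Ioo u t) := by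
    intro u hu
    apply hmono.injOn.mono
    intro s hs
    simp only [Set.mem_Ioo] at hs
    exact Set.mem_Icc.2 ⟨(hu.1.trans hs.1).le, hs.2.le.trans htb⟩
  have himg : ∀ u ∈ Set.Ioo a t, ψ '' Set.Ioo u t = Set.Ioo (ψ u) (ψ t) := by
    intro u hu
    have huI : u ∈ Set.Icc a b := ⟨hu.1.le, (hu.2.le).trans htb⟩
    have htI : t ∈ Set.Icc a b := ht
    apply Set.Subset.antisymm
    · rintro x ⟨s, hs, rfl⟩
      have hsI : s ∈ Set.Icc a b := Set.Ioo_subset_Icc_self (hsub u hu hs)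
      exact ⟨hmono huI hsI hs.1, hmono hsI htI hs.2⟩
    · have := intermediate_value_Ioo (hu.2.le)
        (hψcont.mono (Set.Icc_subset_Icc hu.1.le htb))
      exact this
  have hψut : ∀ u ∈ Set.Ioo a t, ψ u < ψ t := by
    intro u hu
    exact hmono ⟨hu.1.le, hu.2.le.trans htb⟩ ht hu.2
  have hKeq : ∀ u ∈ Set.Ioo a t, ∀ s ∈ Set.Ioo u t,
      |w s| • ((ψ t - ψ s) ^ (α - 1) * (ψ s - ψ u) ^ (-α)) = K s u := by
    intro u hu s hs
    rw [smul_eq_mul, abs_of_pos (hwpos s (hsub u hu hs))]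
  have hKint : ∀ u ∈ Set.Ioo a t, IntegrableOn (fun s => K s u) (Set.Ioo u t) := by
    intro u hu
    have hiff := integrableOn_image_iff_integrableOn_abs_deriv_smul
      measurableSet_Ioo (hder u hu) (hinj u hu)
      (fun x => (ψ t - x) ^ (α - 1) * (x - ψ u) ^ (-α))
    rw [himg u hu] at hiff
    have hbase : IntegrableOn (fun x => (ψ t - x) ^ (α - 1) * (x - ψ u) ^ (-α))
        (Set.Ioo (ψ u) (ψ t)) :=
      beta_integrable (hψut u hu) (by linarith) (by linarith)
    have h2 := hiff.1 hbase
    apply h2.congr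
    filter_upwards [ae_restrict_mem measurableSet_Ioo] with s hs
    exact hKeq u hu s hs
  have hKval : ∀ u ∈ Set.Ioo a t, ∫ s in Set.Ioo u t, K s u = B := by
    intro u hu
    have hi := integral_image_eq_integral_abs_deriv_smul
      measurableSet_Ioo (hder u hu) (hinj u hu)
      (fun x => (ψ t - x) ^ (α - 1) * (x - ψ u) ^ (-α))
    rw [himg u hu, beta_value (hψut u hu) hα0 hα1] at hi
    have heq := setIntegral_congr_fun (μ := volume) measurableSet_Ioo
      (f := fun s => K s u)
      (g := fun s => |w s| • ((ψ t - ψ s) ^ (α - 1) * (ψ s - ψ u) ^ (-α)))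
      (fun s hs => (hKeq u hu s hs).symm)
    rw [heq, ← hi, hB]
  have hKpos : ∀ u ∈ Set.Ioo a t, ∀ s ∈ Set.Ioo u t, 0 ≤ K s u := by
    intro u hu s hs
    have hmem : ψ s ∈ Set.Ioo (ψ u) (ψ t) := by
      rw [← himg u hu]; exact Set.mem_image_of_mem ψ hs
    simp only [hK]
    exact mul_nonneg (hwpos s (hsub u hu hs)).le
      (mul_nonneg (Real.rpow_nonneg (by linarith [hmem.2]) _)
        (Real.rpow_nonneg (by linarith [hmem.1]) _))
  -- slice descriptions of H
  have hslice1 : ∀ u ∈ Set.Ioo a t,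
      (fun s => H (s, u)) = (Set.Ioo u t).indicator (fun s => K s u * g u) := by
    intro u hu
    funext s
    by_cases hs : s ∈ Set.Ioo u t
    · rw [Set.indicator_of_mem hs]
      have hT' : (s, u) ∈ T := ⟨⟨hu.1.trans hs.1, hs.2⟩, ⟨hu.1, hs.1⟩⟩
      simp only [hH]
      rw [Set.indicator_of_mem hT']
    · have hT' : (s, u) ∉ T := by
        intro h
        exact hs ⟨h.2.2, h.1.2⟩
      rw [Set.indicator_of_notMem hs]
      simp only [hH]
      rw [Set.indicator_of_notMem hT']
  have hslice1' : ∀ u, u ∉ Set.Ioo a t → (fun s => H (s, u)) = fun _ => 0 := by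
    intro u hu
    funext s
    have hT' : (s, u) ∉ T := by
      intro h
      exact hu ⟨h.2.1, h.2.2.trans h.1.2⟩
    simp only [hH]
    rw [Set.indicator_of_notMem hT']
  have hslice2 : ∀ s ∈ Set.Ioo a t,
      (fun u => H (s, u)) = (Set.Ioo a s).indicator (fun u => K s u * g u) := by
    intro s hs
    funext u
    by_cases hu : u ∈ Set.Ioo a s
    · rw [Set.indicator_of_mem hu]
      have hT' : (s, u) ∈ T := ⟨hs, hu⟩
      simp only [hH]
      rw [Set.indicator_of_mem hT']
    · have hT' : (s, u) ∉ T := by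
        intro h
        exact hu h.2
      rw [Set.indicator_of_notMem hu]
      simp only [hH]
      rw [Set.indicator_of_notMem hT']
  have hslice2' : ∀ s, s ∉ Set.Ioo a t → (fun u => H (s, u)) = fun _ => 0 := by
    intro s hs
    funext u
    have hT' : (s, u) ∉ T := fun h => hs h.1
    simp only [hH]
    rw [Set.indicator_of_notMem hT']
  -- measurability of H
  have hHmeas : AEStronglyMeasurable H (volume.prod volume) := by
    rw [hH, aestronglyMeasurable_indicator_iff hTmeas]
    apply AEMeasurable.aestronglyMeasurable
    have hmapsTo1 : Set.MapsTo (fun p : ℝ × ℝ => p.1) T (Set.Icc a b) := by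
      intro p hp
      exact ⟨hp.1.1.le, hp.1.2.le.trans htb⟩
    have hmapsTo2 : Set.MapsTo (fun p : ℝ × ℝ => p.2) T (Set.Icc a b) := by
      intro p hp
      exact ⟨hp.2.1.le, ((hp.2.2.trans hp.1.2).le).trans htb⟩
    have mψ1 : AEMeasurable (fun p : ℝ × ℝ => ψ p.1) ((volume.prod volume).restrict T) :=
      (hψcont.comp continuous_fst.continuousOn hmapsTo1).aemeasurable hTmeas
    have mψ2 : AEMeasurable (fun p : ℝ × ℝ => ψ p.2) ((volume.prod volume).restrict T) :=
      (hψcont.comp continuous_snd.continuousOn hmapsTo2).aemeasurable hTmeas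
    have mw : AEMeasurable (fun p : ℝ × ℝ => w p.1) ((volume.prod volume).restrict T) :=
      ((measurable_deriv ψ).comp measurable_fst).aemeasurable
    have mg : AEMeasurable (fun p : ℝ × ℝ => g p.2) ((volume.prod volume).restrict T) :=
      ((measurable_deriv f).comp measurable_snd).aemeasurable
    have m1 : AEMeasurable (fun p : ℝ × ℝ => (ψ t - ψ p.1) ^ (α - 1))
        ((volume.prod volume).restrict T) :=
      (meas_rpow_const (α - 1)).comp_aemeasurable (aemeasurable_const.sub mψ1)
    have m2 : AEMeasurable (fun p : ℝ × ℝ => (ψ p.1 - ψ p.2) ^ (-α))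
        ((volume.prod volume).restrict T) :=
      (meas_rpow_const (-α)).comp_aemeasurable (mψ1.sub mψ2)
    simp only [hK]
    exact ((mw.mul (m1.mul m2)).mul mg)
  -- integrability of H on the product space
  have hHint : Integrable H (volume.prod volume) := by
    rw [MeasureTheory.integrable_prod_iff' hHmeas]
    constructor
    · apply Filter.Eventually.of_forall
      intro u
      by_cases hu : u ∈ Set.Ioo a t
      · rw [hslice1 u hu, integrable_indicator_iff measurableSet_Ioo]
        exact (hKint u hu).mul_const (g u)
      · rw [hslice1' u hu]
        exact integrable_zero _ _ _
    · have heq : (fun u => ∫ s, ‖H (s, u)‖) =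
          (Set.Ioo a t).indicator (fun u => B * |g u|) := by
        funext u
        by_cases hu : u ∈ Set.Ioo a t
        · rw [Set.indicator_of_mem hu]
          have hn : (fun s => ‖H (s, u)‖) =
              (Set.Ioo u t).indicator (fun s => K s u * |g u|) := by
            funext s
            rw [show H (s, u) = ((Set.Ioo u t).indicator (fun s => K s u * g u)) s from
              congrFun (hslice1 u hu) s]
            by_cases hs : s ∈ Set.Ioo u t
            · rw [Set.indicator_of_mem hs, Set.indicator_of_mem hs, norm_mul,
                Real.norm_eq_abs, Real.norm_eq_abs, abs_of_nonneg (hKpos u hu s hs)]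
            · rw [Set.indicator_of_notMem hs, Set.indicator_of_notMem hs, norm_zero]
          rw [hn, MeasureTheory.integral_indicator measurableSet_Ioo,
            MeasureTheory.integral_mul_const, hKval u hu]
        · rw [Set.indicator_of_notMem hu]
          have h0 : ∫ s, ‖H (s, u)‖ = ∫ _ : ℝ, (0:ℝ) := by
            congr 1
            funext s
            rw [congrFun (hslice1' u hu) s, norm_zero]
          rw [h0, integral_zero]
      rw [heq, integrable_indicator_iff measurableSet_Ioo]
      refine Integrable.mono' (integrableOn_const (C := B * M) (hs := measure_Ioo_lt_top.ne)) ?_ ?_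
      · exact (((measurable_deriv f).abs.const_mul B).aestronglyMeasurable).restrict
      · filter_upwards [ae_restrict_mem measurableSet_Ioo] with u hu
        have hgu : |g u| ≤ M := hM u ⟨hu.1, hu.2.trans_le htb⟩
        rw [Real.norm_eq_abs, abs_of_nonneg (mul_nonneg hBpos.le (abs_nonneg _))]
        exact mul_le_mul_of_nonneg_left hgu hBpos.le
  -- Fubini
  have hswap : ∫ s, (∫ u, H (s, u)) = ∫ u, (∫ s, H (s, u)) :=
    MeasureTheory.integral_integral_swap (f := fun s u => H (s, u)) hHint
  -- integrability of g on (a, t)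
  have hgInt : IntegrableOn g (Set.Ioo a t) := by
    refine Integrable.mono' (integrableOn_const (C := M) (hs := measure_Ioo_lt_top.ne)) ?_ ?_
    · exact (measurable_deriv f).aestronglyMeasurable.restrict
    · filter_upwards [ae_restrict_mem measurableSet_Ioo] with x hx
      rw [Real.norm_eq_abs]
      exact hM x ⟨hx.1, hx.2.trans_le htb⟩
  have hgII : IntervalIntegrable g volume a t := by
    rw [intervalIntegrable_iff, Set.uIoc_of_le hat.le,
      integrableOn_Ioc_iff_integrableOn_Ioo]
    exact hgInt
  -- FTC
  have hftc : ∫ u in Set.Ioo a t, g u = f t - f a := by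
    have h := intervalIntegral.integral_eq_sub_of_hasDeriv_right_of_le hat.le
      (hf.continuousOn.mono (Set.Icc_subset_Icc le_rfl htb))
      (fun x hx => (hfdiff x ⟨hx.1, hx.2.trans_le htb⟩).hasDerivWithinAt) hgII
    rw [← h, intervalIntegral.integral_of_le hat.le,
      MeasureTheory.integral_Ioc_eq_integral_Ioo]
  -- the right-hand side after swap
  have hrhs : ∫ u, (∫ s, H (s, u)) = B * (f t - f a) := by
    have r1 : (fun u => ∫ s, H (s, u)) =
        (Set.Ioo a t).indicator (fun u => B * g u) := by
      funext u
      by_cases hu : u ∈ Set.Ioo a t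
      · rw [Set.indicator_of_mem hu]
        have h1 : ∫ s, H (s, u) = ∫ s, ((Set.Ioo u t).indicator (fun s => K s u * g u)) s := by
          congr 1
          exact hslice1 u hu
        rw [h1, MeasureTheory.integral_indicator measurableSet_Ioo,
          MeasureTheory.integral_mul_const, hKval u hu]
      · rw [Set.indicator_of_notMem hu]
        have h1 : ∫ s, H (s, u) = ∫ _ : ℝ, (0:ℝ) := by
          congr 1
          exact hslice1' u hu
        rw [h1, integral_zero]
    rw [r1, MeasureTheory.integral_indicator measurableSet_Ioo,
      MeasureTheory.integral_const_mul, hftc]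
  -- the left-hand side chain
  have hlhs : psiInt ψ α a (psiCaputo ψ α a f) t =
      (1 / Real.Gamma α) * ((1 / Real.Gamma (1 - α)) * ∫ s, (∫ u, H (s, u))) := by
    rw [psiInt]
    congr 1
    have e1 : ∫ s in a..t, w s * (ψ t - ψ s) ^ (α - 1) * psiCaputo ψ α a f s =
        ∫ s in Set.Ioo a t, w s * (ψ t - ψ s) ^ (α - 1) * psiCaputo ψ α a f s := by
      rw [intervalIntegral.integral_of_le hat.le, MeasureTheory.integral_Ioc_eq_integral_Ioo]
    rw [e1]
    have e2 : ∫ s in Set.Ioo a t, w s * (ψ t - ψ s) ^ (α - 1) * psiCaputo ψ α a f s =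
        ∫ s in Set.Ioo a t, (1 / Real.Gamma (1 - α)) * (∫ u, H (s, u)) := by
      apply setIntegral_congr_fun measurableSet_Ioo
      intro s hs
      have h1 : ∫ u, H (s, u) = ∫ u, ((Set.Ioo a s).indicator (fun u => K s u * g u)) u := by
        congr 1
        exact hslice2 s hs
      have h2 : ∫ u in Set.Ioo a s, K s u * g u =
          (w s * (ψ t - ψ s) ^ (α - 1)) * ∫ u in Set.Ioo a s, (ψ s - ψ u) ^ (-α) * g u := by
        rw [← MeasureTheory.integral_const_mul]
        apply setIntegral_congr_fun measurableSet_Ioo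
        intro u hu
        simp only [hK]
        ring
      show w s * (ψ t - ψ s) ^ (α - 1) * psiCaputo ψ α a f s =
        (1 / Real.Gamma (1 - α)) * ∫ u, H (s, u)
      rw [psiCaputo, if_neg (by intro h; rw [h] at hα1; exact lt_irrefl 1 hα1),
        h1, MeasureTheory.integral_indicator measurableSet_Ioo, h2,
        intervalIntegral.integral_of_le hs.1.le, MeasureTheory.integral_Ioc_eq_integral_Ioo]
      ring
    rw [e2, MeasureTheory.integral_const_mul]
    congr 1
    have e4 : (fun s => ∫ u, H (s, u)) =
        (Set.Ioo a t).indicator (fun s => ∫ u, H (s, u)) := by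
      funext s
      by_cases hs : s ∈ Set.Ioo a t
      · rw [Set.indicator_of_mem hs]
      · rw [Set.indicator_of_notMem hs]
        have h1 : ∫ u, H (s, u) = ∫ _ : ℝ, (0:ℝ) := by
          congr 1
          exact hslice2' s hs
        rw [h1, integral_zero]
    conv_rhs => rw [e4]
    rw [MeasureTheory.integral_indicator measurableSet_Ioo]
  rw [hlhs, hswap, hrhs, hB]
  have : Real.Gamma α ≠ 0 := hΓ1.ne'
  have : Real.Gamma (1 - α) ≠ 0 := hΓ2.ne'
  field_simp
end

section
/- Let ψ ∈ C¹([a,b]) with ψ'(t) > 0 on [a,b], α ∈ (0,1], A an n×n real matrix, and u : [a,b] → ℝⁿ continuous. Then for every t ∈ (a,b] the series of generalized ψ-convolutions can be resummed into a Mittag–Leffler kernel: Σ_{l=0}^{∞} A^{l} ∫_a^t ((ψ(s) − ψ(a))^{lα+α−1}/Γ(lα+α)) u(ψ^{−1}(ψ(t)+ψ(a)−ψ(s))) ψ'(s) ds = ∫_a^t ψ'(s) (ψ(t) − ψ(s))^{α−1} E_{α,α}(A (ψ(t) − ψ(s))^{α}) u(s) ds, where E_{α,α} is the two-parameter matrix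 Mittag–Leffler function. -/
open MeasureTheory intervalIntegral Real

section Helpers

lemma gamma_summable {α α' : ℝ} (hα : 0 < α) (hα' : 0 < α') {C : ℝ} (hC : 0 ≤ C) :
    Summable (fun l : ℕ => C ^ l / Real.Gamma (α * l + α')) := by
  set a : ℕ → ℝ := fun l => C ^ l / Real.Gamma (α * l + α') with ha
  have hΓpos : ∀ l : ℕ, 0 < Real.Gamma (α * l + α') := by
    intro l
    apply Real.Gamma_pos_of_pos
    positivity
  have hann : ∀ l, 0 ≤ a l := fun l => div_nonneg (pow_nonneg hC l) (hΓpos l).le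
  -- choose k with 1 ≤ k and 1 ≤ k * α
  obtain ⟨k0, hk0⟩ := exists_nat_ge (1 / α)
  set k := max k0 1 with hk
  have hk1 : 1 ≤ k := le_max_right _ _
  have hkα : 1 ≤ (k : ℝ) * α := by
    have : 1 / α ≤ (k : ℝ) := le_trans hk0 (by exact_mod_cast le_max_left k0 1)
    calc (1:ℝ) = (1/α) * α := by field_simp
    _ ≤ (k : ℝ) * α := by apply mul_le_mul_of_nonneg_right this hα.le
  -- choose L with α * L + α' ≥ 1 and ≥ 2 * C ^ k + 1
  obtain ⟨L, hL⟩ := exists_nat_ge ((max 1 (2 * C ^ k + 1)) / α)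
  have hyL : ∀ l : ℕ, L ≤ l → max 1 (2 * C ^ k + 1) ≤ α * l + α' := by
    intro l hl
    have h0 : (max 1 (2 * C ^ k + 1)) ≤ (L:ℝ) * α := (div_le_iff₀ hα).mp hL
    have : (max 1 (2 * C ^ k + 1)) ≤ α * L := by linarith
    have h2 : α * (L:ℝ) ≤ α * l := by
      apply mul_le_mul_of_nonneg_left _ hα.le
      exact_mod_cast hl
    linarith
  -- decay step
  have hdecay : ∀ l : ℕ, L ≤ l → a (l + k) ≤ (1/2) * a l := by
    intro l hl
    have hy1 : (1:ℝ) ≤ α * l + α' := le_trans (le_max_left _ _) (hyL l hl)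
    have hy2 : 2 * C ^ k + 1 ≤ α * l + α' := le_trans (le_max_right _ _) (hyL l hl)
    set y := α * l + α' with hy
    have hGmono : y * Real.Gamma y ≤ Real.Gamma (α * (l + k : ℕ) + α') := by
      have h1 : Real.Gamma (y + 1) = y * Real.Gamma y := Real.Gamma_add_one (by linarith)
      have harg : α * ((l : ℝ) + k) + α' = y + (k : ℝ) * α := by ring
      have h2 : Real.Gamma (y + 1) ≤ Real.Gamma (y + k * α) := by
        rcases eq_or_lt_of_le hkα with heq | hlt
        · rw [← heq]
        · apply le_of_lt
          apply Real.Gamma_strictMonoOn_Ici _ _ (by linarith)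
          · simp only [Set.mem_Ici]; linarith
          · simp only [Set.mem_Ici]; linarith
      calc y * Real.Gamma y = Real.Gamma (y + 1) := h1.symm
        _ ≤ Real.Gamma (y + k * α) := h2
        _ = Real.Gamma (α * ((l + k : ℕ) : ℝ)  + α') := by rw [hy]; congr 1; push_cast; ring
    have hC2 : C ^ k / y ≤ 1 / 2 := by
      rw [div_le_div_iff₀ (by linarith) (by norm_num)]
      nlinarith [pow_nonneg hC k]
    have : a (l + k) = (C ^ k * C ^ l) / Real.Gamma (α * (l + k : ℕ) + α') := by
      rw [ha]; simp only []
      rw [← pow_add]; ring_nf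
    rw [this]
    have hΓy : 0 < Real.Gamma y := hΓpos l
    have hGpos : 0 < Real.Gamma (α * ((l + k : ℕ) : ℝ) + α') := hΓpos (l + k)
    calc C ^ k * C ^ l / Real.Gamma (α * ((l+k : ℕ) : ℝ) + α')
        ≤ C ^ k * C ^ l / (y * Real.Gamma y) := by
          apply div_le_div_of_nonneg_left _ _ hGmono
          · positivity
          · positivity
      _ = (C ^ k / y) * (C ^ l / Real.Gamma y) := (div_mul_div_comm _ _ _ _).symm
      _ ≤ (1/2) * (C ^ l / Real.Gamma y) := by
          apply mul_le_mul_of_nonneg_right hC2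
          positivity
      _ = (1/2) * a l := rfl
  -- iterate to get geometric decay
  set M0 : ℝ := ∑ r ∈ Finset.range k, a (L + r) with hM0
  have hM0bound : ∀ m : ℕ, m < k → a (L + m) ≤ M0 := by
    intro m hm
    apply Finset.single_le_sum (f := fun r => a (L + r)) (fun r _ => hann _)
    exact Finset.mem_range.mpr hm
  have key : ∀ m : ℕ, a (L + m) ≤ M0 * (1/2 : ℝ) ^ (m / k) := by
    intro m
    induction m using Nat.strong_induction_on with
    | _ m ih =>
      rcases lt_or_ge m k with hmk | hkm
      · rw [Nat.div_eq_of_lt hmk, pow_zero, mul_one]; exact hM0bound m hmk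
      · have hk0' : 0 < k := hk1
        have hrec : m / k = (m - k) / k + 1 := Nat.div_eq_sub_div hk0' hkm
        have h1 : a (L + m) = a ((L + (m - k)) + k) := by
          congr 1; omega
        have h2 : a ((L + (m - k)) + k) ≤ (1/2) * a (L + (m - k)) :=
          hdecay _ (Nat.le_add_right _ _)
        have h3 : a (L + (m - k)) ≤ M0 * (1/2 : ℝ) ^ ((m - k) / k) :=
          ih (m - k) (by omega)
        rw [h1, hrec, pow_succ]
        calc a ((L + (m - k)) + k) ≤ (1/2) * (M0 * (1/2:ℝ) ^ ((m-k)/k)) := by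
              apply h2.trans
              apply mul_le_mul_of_nonneg_left h3 (by norm_num)
          _ = M0 * ((1/2:ℝ) ^ ((m-k)/k) * (1/2)) := by ring
  -- geometric comparison
  set r : ℝ := (1/2 : ℝ) ^ ((1:ℝ) / k) with hr
  have hr0 : 0 < r := Real.rpow_pos_of_pos (by norm_num) _
  have hr1 : r < 1 := by
    apply Real.rpow_lt_one (by norm_num) (by norm_num)
    positivity
  have hgeo : ∀ m : ℕ, (1/2 : ℝ) ^ (m / k) ≤ 2 * r ^ m := by
    intro m
    have hk0' : (0:ℝ) < k := by exact_mod_cast hk1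
    have hdiv : (m : ℝ) / k - 1 ≤ ((m / k : ℕ) : ℝ) := by
      have hmod := Nat.div_add_mod m k
      have hlt : m % k < k := Nat.mod_lt m hk1
      have h0 : m < (m / k + 1) * k := by rw [add_mul, one_mul, mul_comm]; omega
      have h0' : (m : ℝ) < (((m / k : ℕ) : ℝ) + 1) * k := by exact_mod_cast h0
      rw [sub_le_iff_le_add, div_le_iff₀ hk0']
      nlinarith
    have h1 : ((1:ℝ)/2) ^ (m / k : ℕ) = (1/2 : ℝ) ^ (((m / k : ℕ) : ℝ)) := by
      rw [Real.rpow_natCast]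
    rw [h1]
    have h2 : (1/2 : ℝ) ^ (((m/k : ℕ)) : ℝ) ≤ (1/2 : ℝ) ^ ((m : ℝ)/k - 1) :=
      Real.rpow_le_rpow_of_exponent_ge (by norm_num) (by norm_num) hdiv
    apply h2.trans
    rw [Real.rpow_sub (by norm_num), Real.rpow_one]
    have h3 : (1/2 : ℝ) ^ ((m:ℝ)/k) = r ^ m := by
      rw [hr, ← Real.rpow_natCast ((1/2 : ℝ) ^ ((1:ℝ)/k)) m, ← Real.rpow_mul (by norm_num)]
      congr 1; field_simp
    rw [h3]; apply le_of_eq; ring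
  have hsum : Summable (fun m : ℕ => a (L + m)) := by
    apply Summable.of_nonneg_of_le (fun m => hann _) (fun m => ?_)
      (((summable_geometric_of_lt_one hr0.le hr1).mul_left (M0 * 2)))
    calc a (L + m) ≤ M0 * (1/2:ℝ) ^ (m/k) := key m
      _ ≤ M0 * (2 * r ^ m) := by
          apply mul_le_mul_of_nonneg_left (hgeo m)
          apply Finset.sum_nonneg (fun i _ => hann _)
      _ = M0 * 2 * r ^ m := by ring
  exact (summable_nat_add_iff L).mp (hsum.congr fun m => by rw [add_comm])


noncomputable def opCLM {n : ℕ} (A : Matrix (Fin n) (Fin n) ℝ) :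
    (Fin n → ℝ) →L[ℝ] (Fin n → ℝ) :=
  LinearMap.toContinuousLinearMap (Matrix.mulVecLin A)

lemma opCLM_apply {n : ℕ} (A : Matrix (Fin n) (Fin n) ℝ) (v : Fin n → ℝ) :
    opCLM A v = A.mulVec v := rfl

lemma mulVec_pow_norm_le {n : ℕ} (A : Matrix (Fin n) (Fin n) ℝ) (l : ℕ) (v : Fin n → ℝ) :
    ‖(A ^ l).mulVec v‖ ≤ ‖opCLM A‖ ^ l * ‖v‖ := by
  induction l generalizing v with
  | zero => simp [Matrix.one_mulVec]
  | succ l ih =>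
    have h1 : (A ^ (l + 1)).mulVec v = (A ^ l).mulVec (A.mulVec v) := by
      rw [Matrix.mulVec_mulVec, ← pow_succ]
    rw [h1]
    calc ‖(A ^ l).mulVec (A.mulVec v)‖ ≤ ‖opCLM A‖ ^ l * ‖A.mulVec v‖ := ih (A.mulVec v)
      _ ≤ ‖opCLM A‖ ^ l * (‖opCLM A‖ * ‖v‖) := by
          apply mul_le_mul_of_nonneg_left _ (pow_nonneg (norm_nonneg _) l)
          rw [← opCLM_apply]
          exact (opCLM A).le_opNorm v
      _ = ‖opCLM A‖ ^ (l + 1) * ‖v‖ := by ring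


lemma integrableOn_rpow_shift (c d : ℝ) {e : ℝ} (he : -1 < e) :
    IntegrableOn (fun y => (y - c) ^ e) (Set.Icc c d) := by
  rcases le_or_gt d c with h | h
  · rw [integrableOn_Icc_iff_integrableOn_Ioc, Set.Ioc_eq_empty (not_lt.mpr h)]
    simp
  · have h1 : IntervalIntegrable (fun x : ℝ => x ^ e) volume 0 (d - c) :=
      intervalIntegral.intervalIntegrable_rpow' he
    have h2 := h1.comp_sub_right c
    rw [zero_add, sub_add_cancel] at h2
    rw [integrableOn_Icc_iff_integrableOn_Ioc]
    exact (intervalIntegrable_iff_integrableOn_Ioc_of_le h.le).mp h2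

lemma integrableOn_rpow_shift' (c d : ℝ) {e : ℝ} (he : -1 < e) :
    IntegrableOn (fun y => (d - y) ^ e) (Set.Icc c d) := by
  rcases le_or_gt d c with h | h
  · rw [integrableOn_Icc_iff_integrableOn_Ioc, Set.Ioc_eq_empty (not_lt.mpr h)]
    simp
  · have h1 : IntervalIntegrable (fun x : ℝ => x ^ e) volume 0 (d - c) :=
      intervalIntegral.intervalIntegrable_rpow' he
    have h2 := (h1.comp_sub_left d).symm
    have e1 : d - (0:ℝ) = d := by ring
    have e2 : d - (d - c) = c := by ring
    rw [e1, e2] at h2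
    rw [integrableOn_Icc_iff_integrableOn_Ioc]
    exact (intervalIntegrable_iff_integrableOn_Ioc_of_le h.le).mp h2


lemma integrableOn_of_bound_rpow {E : Type*} [NormedAddCommGroup E] {c d : ℝ} {e : ℝ}
    (he : -1 < e) {f : ℝ → E} (hf : AEStronglyMeasurable f (volume.restrict (Set.Icc c d)))
    {M : ℝ} (hbound : ∀ᵐ y ∂(volume.restrict (Set.Icc c d)), ‖f y‖ ≤ M * (y - c) ^ e) :
    IntegrableOn f (Set.Icc c d) :=
  Integrable.mono' ((integrableOn_rpow_shift c d he).const_mul M) hf hbound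

lemma integrableOn_of_bound_rpow' {E : Type*} [NormedAddCommGroup E] {c d : ℝ} {e : ℝ}
    (he : -1 < e) {f : ℝ → E} (hf : AEStronglyMeasurable f (volume.restrict (Set.Icc c d)))
    {M : ℝ} (hbound : ∀ᵐ y ∂(volume.restrict (Set.Icc c d)), ‖f y‖ ≤ M * (d - y) ^ e) :
    IntegrableOn f (Set.Icc c d) :=
  Integrable.mono' ((integrableOn_rpow_shift' c d he).const_mul M) hf hbound

lemma subst_lemma {E : Type*} [NormedAddCommGroup E] [NormedSpace ℝ E] {a t : ℝ} (hat : a < t)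
    {ψ : ℝ → ℝ} (hψc : ContinuousOn ψ (Set.Icc a t))
    (hder : ∀ x ∈ Set.Ioo a t, HasDerivAt ψ (deriv ψ x) x)
    (hmono : StrictMonoOn ψ (Set.Icc a t))
    {G : ℝ → E}
    (hGc : ContinuousOn G (Set.Ioo (ψ a) (ψ t)))
    (hGi : IntegrableOn G (Set.Icc (ψ a) (ψ t)))
    (hGFi : IntegrableOn (fun x => deriv ψ x • G (ψ x)) (Set.Icc a t)) :
    ∫ x in a..t, deriv ψ x • G (ψ x) = ∫ y in ψ a..ψ t, G y := by
  have huIcc : Set.uIcc a t = Set.Icc a t := Set.uIcc_of_le hat.le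
  have hmin : min a t = a := min_eq_left hat.le
  have hmax : max a t = t := max_eq_right hat.le
  have himage : ψ '' Set.Icc a t = Set.Icc (ψ a) (ψ t) := by
    apply Set.Subset.antisymm
    · rintro y ⟨x, hx, rfl⟩
      exact ⟨hmono.monotoneOn (Set.left_mem_Icc.mpr hat.le) hx hx.1,
        hmono.monotoneOn hx (Set.right_mem_Icc.mpr hat.le) hx.2⟩
    · exact intermediate_value_Icc hat.le hψc
  have h := intervalIntegral.integral_comp_smul_deriv''' (f := ψ) (f' := deriv ψ) (g := G)
    (a := a) (b := t) ?_ ?_ ?_ ?_ ?_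
  · exact h
  · rwa [huIcc]
  · rw [hmin, hmax]; exact fun x hx => (hder x hx).hasDerivWithinAt
  · rw [hmin, hmax]
    apply hGc.mono
    rintro y ⟨x, hx, rfl⟩
    exact ⟨hmono (Set.left_mem_Icc.mpr hat.le) (Set.Ioo_subset_Icc_self hx) hx.1,
      hmono (Set.Ioo_subset_Icc_self hx) (Set.right_mem_Icc.mpr hat.le) hx.2⟩
  · rwa [huIcc, himage]
  · rwa [huIcc]


end Helpers

/-- The two-parameter matrix Mittag–Leffler function
`E_{α,α'}(A) = Σ_{l=0}^{∞} A^l / Γ(αl + α')`. -/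
noncomputable def mlMatrix {n : ℕ} (α α' : ℝ) (A : Matrix (Fin n) (Fin n) ℝ) :
    Matrix (Fin n) (Fin n) ℝ :=
  ∑' l : ℕ, (1 / Real.Gamma (α * l + α')) • A ^ l

section MLHelpers

noncomputable def mulVecCLM {n : ℕ} (v : Fin n → ℝ) :
    Matrix (Fin n) (Fin n) ℝ →L[ℝ] (Fin n → ℝ) :=
  LinearMap.toContinuousLinearMap
    { toFun := fun M => M.mulVec v
      map_add' := fun M N => Matrix.add_mulVec M N v
      map_smul' := fun c M => Matrix.smul_mulVec c M v }

lemma entry_pow_norm_le {n : ℕ} (A : Matrix (Fin n) (Fin n) ℝ) (l : ℕ) (i j : Fin n) :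
    |(A ^ l) i j| ≤ ‖opCLM A‖ ^ l := by
  have h1 : (A ^ l).mulVec (Pi.single j 1) i = (A ^ l) i j := by
    rw [Matrix.mulVec_single]; simp
  calc |(A ^ l) i j| = ‖(A ^ l).mulVec (Pi.single j 1) i‖ := by rw [h1]; rfl
    _ ≤ ‖(A ^ l).mulVec (Pi.single j 1)‖ := norm_le_pi_norm _ i
    _ ≤ ‖opCLM A‖ ^ l * ‖(Pi.single j 1 : Fin n → ℝ)‖ := mulVec_pow_norm_le A l _
    _ ≤ ‖opCLM A‖ ^ l * 1 := by
        apply mul_le_mul_of_nonneg_left _ (pow_nonneg (norm_nonneg _) l)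
        rw [Pi.norm_single]; norm_num
    _ = ‖opCLM A‖ ^ l := mul_one _


lemma matrix_summable {n : ℕ} {f : ℕ → Matrix (Fin n) (Fin n) ℝ}
    (h : ∀ i j, Summable fun l => f l i j) : Summable f := by
  exact Pi.summable.mpr fun i => Pi.summable.mpr fun j => h i j

lemma mlMatrix_summable {n : ℕ} {α α' : ℝ} (hα : 0 < α) (hα' : 0 < α')
    (B : Matrix (Fin n) (Fin n) ℝ) :
    Summable (fun l : ℕ => (1 / Real.Gamma (α * l + α')) • B ^ l) := by
  apply matrix_summable
  intro i j
  apply Summable.of_abs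
  apply Summable.of_nonneg_of_le (fun l => abs_nonneg _) _
    (gamma_summable hα hα' (norm_nonneg (opCLM B)))
  intro l
  have hΓ : 0 < Real.Gamma (α * l + α') := Real.Gamma_pos_of_pos (by positivity)
  have : ((1 / Real.Gamma (α * l + α')) • B ^ l) i j
      = (1 / Real.Gamma (α * l + α')) * (B ^ l) i j := rfl
  rw [this, abs_mul, abs_of_pos (by positivity : (0:ℝ) < 1 / Real.Gamma (α * l + α'))]
  rw [one_div, div_eq_mul_inv (‖opCLM B‖ ^ l), mul_comm (‖opCLM B‖ ^ l) _]
  apply mul_le_mul_of_nonneg_left (entry_pow_norm_le B l i j) (by positivity)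


lemma mlMatrix_mulVec {n : ℕ} {α α' : ℝ} (hα : 0 < α) (hα' : 0 < α')
    (B : Matrix (Fin n) (Fin n) ℝ) (v : Fin n → ℝ) :
    (mlMatrix α α' B).mulVec v
      = ∑' l : ℕ, (1 / Real.Gamma (α * l + α')) • (B ^ l).mulVec v := by
  have hsum := mlMatrix_summable hα hα' B
  have h1 : (mlMatrix α α' B).mulVec v = mulVecCLM v (mlMatrix α α' B) := rfl
  rw [h1, mlMatrix, (mulVecCLM v).map_tsum hsum]
  congr 1
  funext l
  rw [(mulVecCLM v).map_smul]
  rfl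


lemma mulVec_vec_summable {n : ℕ} {α α' : ℝ} (hα : 0 < α) (hα' : 0 < α')
    (B : Matrix (Fin n) (Fin n) ℝ) (v : Fin n → ℝ) :
    Summable (fun l : ℕ => (1 / Real.Gamma (α * l + α')) • (B ^ l).mulVec v) := by
  have hsum := mlMatrix_summable hα hα' B
  have := hsum.map (mulVecCLM v).toLinearMap.toAddMonoidHom (mulVecCLM v).continuous
  apply this.congr
  intro l
  show mulVecCLM v ((1 / Real.Gamma (α * ↑l + α')) • B ^ l) = _
  rw [(mulVecCLM v).map_smul]
  rfl


end MLHelpers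

/-- resummation of the series of generalized ψ-convolutions into a
Mittag–Leffler kernel. -/
theorem conv_series_eq_mittagLeffler_kernel (a b : ℝ) (hab : a < b) (ψ ψinv : ℝ → ℝ)
    (hψ : ContDiffOn ℝ 1 ψ (Set.Icc a b))
    (hψ' : ∀ t ∈ Set.Icc a b, 0 < deriv ψ t)
    (hinv : ∀ x ∈ Set.Icc a b, ψinv (ψ x) = x)
    (hinv' : ∀ z ∈ Set.Icc (ψ a) (ψ b), ψ (ψinv z) = z)
    (α : ℝ) (hα : α ∈ Set.Ioc (0 : ℝ) 1)
    (n : ℕ) (A : Matrix (Fin n) (Fin n) ℝ)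
    (u : ℝ → Fin n → ℝ) (hu : ContinuousOn u (Set.Icc a b)) :
    ∀ t ∈ Set.Ioc a b,
      (∑' l : ℕ, (A ^ l).mulVec
        (∫ s in a..t,
          (((ψ s - ψ a) ^ ((l : ℝ) * α + α - 1) / Real.Gamma ((l : ℝ) * α + α)) *
              deriv ψ s) • u (ψinv (ψ t + ψ a - ψ s)))) =
      ∫ s in a..t,
        (deriv ψ s * (ψ t - ψ s) ^ (α - 1)) •
          (mlMatrix α α (((ψ t - ψ s) ^ α) • A)).mulVec (u s) := by
  obtain ⟨hα0, hα1⟩ := hα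
  intro t ht
  obtain ⟨hat, htb⟩ := ht
  have hta : t ∈ Set.Icc a b := ⟨hat.le, htb⟩
  have hsub : Set.Icc a t ⊆ Set.Icc a b := Set.Icc_subset_Icc le_rfl htb
  have hψc : ContinuousOn ψ (Set.Icc a b) := hψ.continuousOn
  have hdiff : ∀ x ∈ Set.Icc a b, DifferentiableAt ℝ ψ x := by
    intro x hx; by_contra h
    have h0 := deriv_zero_of_not_differentiableAt h
    linarith [hψ' x hx]
  have hder : ∀ x ∈ Set.Icc a b, HasDerivAt ψ (deriv ψ x) x := fun x hx => (hdiff x hx).hasDerivAt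
  have hdc : ContinuousOn (deriv ψ) (Set.Icc a b) := by
    have h1 := hψ.continuousOn_derivWithin (uniqueDiffOn_Icc hab) le_rfl
    exact h1.congr fun x hx => ((hdiff x hx).derivWithin ((uniqueDiffOn_Icc hab) x hx)).symm
  have hmono : StrictMonoOn ψ (Set.Icc a b) := by
    apply strictMonoOn_of_deriv_pos (convex_Icc a b) hψc
    intro x hx
    rw [interior_Icc] at hx
    exact hψ' x (Set.Ioo_subset_Icc_self hx)
  -- min and max of deriv ψ
  obtain ⟨x0, hx0, hmin0⟩ := isCompact_Icc.exists_isMinOn (Set.nonempty_Icc.mpr hab.le) hdc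
  set m := deriv ψ x0 with hm
  have hm0 : 0 < m := hψ' x0 hx0
  have hlow : ∀ x ∈ Set.Icc a b, m ≤ deriv ψ x := fun x hx => isMinOn_iff.mp hmin0 x hx
  obtain ⟨x1, hx1, hmax1⟩ := isCompact_Icc.exists_isMaxOn (Set.nonempty_Icc.mpr hab.le) hdc
  set M1 := deriv ψ x1 with hM1
  have hM10 : 0 < M1 := hψ' x1 hx1
  have hhigh : ∀ x ∈ Set.Icc a b, deriv ψ x ≤ M1 := fun x hx => isMaxOn_iff.mp hmax1 x hx
  -- growth bounds
  have hgrow : ∀ x ∈ Set.Icc a b, ∀ y ∈ Set.Icc a b, x ≤ y → m * (y - x) ≤ ψ y - ψ x := by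
    intro x hx y hy hxy
    have hmonoφ : MonotoneOn (fun z => ψ z - m * z) (Set.Icc a b) := by
      apply monotoneOn_of_deriv_nonneg (convex_Icc a b)
      · exact hψc.sub ((continuous_const.mul continuous_id).continuousOn)
      · intro z hz
        rw [interior_Icc] at hz
        exact ((hdiff z (Set.Ioo_subset_Icc_self hz)).sub
          ((hasDerivAt_id z).const_mul m).differentiableAt).differentiableWithinAt
      · intro z hz
        rw [interior_Icc] at hz
        have hd : HasDerivAt (fun z => ψ z - m * z) (deriv ψ z - m) z := by
          have := (hder z (Set.Ioo_subset_Icc_self hz)).sub ((hasDerivAt_id z).const_mul m)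
          simp only [mul_one] at this; exact this
        rw [hd.deriv]
        have := hlow z (Set.Ioo_subset_Icc_self hz)
        linarith
    have := hmonoφ hx hy hxy
    simp only [] at this
    linarith
  have hgrow2 : ∀ x ∈ Set.Icc a b, ∀ y ∈ Set.Icc a b, x ≤ y → ψ y - ψ x ≤ M1 * (y - x) := by
    intro x hx y hy hxy
    have hmonoφ : MonotoneOn (fun z => M1 * z - ψ z) (Set.Icc a b) := by
      apply monotoneOn_of_deriv_nonneg (convex_Icc a b)
      · exact ((continuous_const.mul continuous_id).continuousOn).sub hψc
      · intro z hz
        rw [interior_Icc] at hz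
        exact (((hasDerivAt_id z).const_mul M1).differentiableAt.sub
          (hdiff z (Set.Ioo_subset_Icc_self hz))).differentiableWithinAt
      · intro z hz
        rw [interior_Icc] at hz
        have hd : HasDerivAt (fun z => M1 * z - ψ z) (M1 - deriv ψ z) z := by
          have := ((hasDerivAt_id z).const_mul M1).sub (hder z (Set.Ioo_subset_Icc_self hz))
          simp only [mul_one] at this; exact this
        rw [hd.deriv]
        have := hhigh z (Set.Ioo_subset_Icc_self hz)
        linarith
    have := hmonoφ hx hy hxy
    simp only [] at this
    linarith
  -- bound on u
  obtain ⟨Mu, hMu⟩ := isCompact_Icc.exists_bound_of_continuousOn hu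
  have hMu0 : 0 ≤ Mu := le_trans (norm_nonneg (u a)) (hMu a (Set.left_mem_Icc.mpr hab.le))
  -- ψ values
  have hψat : ψ a < ψ t := hmono (Set.left_mem_Icc.mpr hab.le) hta hat
  have hψtb : ψ t ≤ ψ b := hmono.monotoneOn hta (Set.right_mem_Icc.mpr hab.le) htb
  have hψab : ψ a < ψ b := lt_of_lt_of_le hψat hψtb
  -- ψinv facts
  have himageab : ψ '' Set.Icc a b = Set.Icc (ψ a) (ψ b) := by
    apply Set.Subset.antisymm
    · rintro y ⟨x, hx, rfl⟩
      exact ⟨hmono.monotoneOn (Set.left_mem_Icc.mpr hab.le) hx hx.1,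
        hmono.monotoneOn hx (Set.right_mem_Icc.mpr hab.le) hx.2⟩
    · exact intermediate_value_Icc hab.le hψc
  have hinv_maps : ∀ z ∈ Set.Icc (ψ a) (ψ b), ψinv z ∈ Set.Icc a b := by
    intro z hz
    rw [← himageab] at hz
    obtain ⟨x, hx, rfl⟩ := hz
    rw [hinv x hx]
    exact hx
  have hinv_mono : StrictMonoOn ψinv (Set.Icc (ψ a) (ψ b)) := by
    intro z1 h1 z2 h2 hlt
    by_contra hle
    push_neg at hle
    have := hmono.monotoneOn (hinv_maps z2 h2) (hinv_maps z1 h1) hle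
    rw [hinv' z1 h1, hinv' z2 h2] at this
    linarith
  have hinv_image : ψinv '' Set.Icc (ψ a) (ψ b) = Set.Icc a b := by
    apply Set.Subset.antisymm
    · rintro x ⟨z, hz, rfl⟩
      exact hinv_maps z hz
    · intro x hx
      refine ⟨ψ x, ?_, hinv x hx⟩
      rw [← himageab]
      exact Set.mem_image_of_mem ψ hx
  have hinv_contOn : ContinuousOn ψinv (Set.Ioo (ψ a) (ψ b)) := by
    intro z hz
    apply ContinuousAt.continuousWithinAt
    apply hinv_mono.continuousAt_of_image_mem_nhds (Icc_mem_nhds hz.1 hz.2)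
    rw [hinv_image]
    apply Icc_mem_nhds
    · have := hinv_mono (Set.left_mem_Icc.mpr hψab.le) (Set.Ioo_subset_Icc_self hz) hz.1
      rwa [hinv a (Set.left_mem_Icc.mpr hab.le)] at this
    · have := hinv_mono (Set.Ioo_subset_Icc_self hz) (Set.right_mem_Icc.mpr hψab.le) hz.2
      rwa [hinv b (Set.right_mem_Icc.mpr hab.le)] at this
  -- reflection center
  set c : ℝ := ψ t + ψ a with hcdef
  -- constants
  set CA : ℝ := ‖opCLM A‖ with hCA
  have hCA0 : 0 ≤ CA := norm_nonneg _
  -- rpow comparison bound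
  have hC1 : ∀ e : ℝ, ∀ X d : ℝ, 0 < d → m * d ≤ X → X ≤ M1 * d →
      X ^ e ≤ (max (m ^ e) (M1 ^ e)) * d ^ e := by
    intro e X d hd h1 h2
    rcases le_or_gt 0 e with he | he
    · calc X ^ e ≤ (M1 * d) ^ e := Real.rpow_le_rpow (by nlinarith) h2 he
        _ = M1 ^ e * d ^ e := Real.mul_rpow hM10.le hd.le
        _ ≤ (max (m ^ e) (M1 ^ e)) * d ^ e := by
            apply mul_le_mul_of_nonneg_right (le_max_right _ _) (Real.rpow_nonneg hd.le e)
    · calc X ^ e ≤ (m * d) ^ e := Real.rpow_le_rpow_of_nonpos (by positivity) h1 he.le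
        _ = m ^ e * d ^ e := Real.mul_rpow hm0.le hd.le
        _ ≤ (max (m ^ e) (M1 ^ e)) * d ^ e := by
            apply mul_le_mul_of_nonneg_right (le_max_left _ _) (Real.rpow_nonneg hd.le e)
  -- measure-theoretic transfer
  have hmr : ∀ c' d' : ℝ, volume.restrict (Set.Icc c' d') = volume.restrict (Set.Ioo c' d') :=
    fun c' d' => (Measure.restrict_congr_set Ioo_ae_eq_Icc).symm
  have hIooIccb : Set.Ioo (ψ a) (ψ t) ⊆ Set.Ioo (ψ a) (ψ b) := Set.Ioo_subset_Ioo le_rfl hψtb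
  have hrefl_mem : ∀ y ∈ Set.Ioo (ψ a) (ψ t), c - y ∈ Set.Ioo (ψ a) (ψ t) := by
    intro y hy
    constructor
    · simp only [hcdef]; linarith [hy.2]
    · simp only [hcdef]; linarith [hy.1]
  have hrefl_memI : ∀ y ∈ Set.Icc (ψ a) (ψ t), c - y ∈ Set.Icc (ψ a) (ψ t) := by
    intro y hy
    constructor
    · simp only [hcdef]; linarith [hy.2]
    · simp only [hcdef]; linarith [hy.1]
  have hU : ContinuousOn (fun y => u (ψinv (c - y))) (Set.Ioo (ψ a) (ψ t)) := by
    apply hu.comp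
    · apply hinv_contOn.comp ((continuous_const.sub continuous_id).continuousOn)
      exact fun y hy => hIooIccb (hrefl_mem y hy)
    · exact fun y hy => hinv_maps _ (Set.Ioo_subset_Icc_self (hIooIccb (hrefl_mem y hy)))
  have hUt : ContinuousOn (fun y => u (ψinv y)) (Set.Ioo (ψ a) (ψ t)) :=
    hu.comp (hinv_contOn.mono hIooIccb)
      (fun y hy => hinv_maps _ (Set.Ioo_subset_Icc_self (hIooIccb hy)))
  have hψIoo : ∀ x ∈ Set.Ioo a t, ψ x ∈ Set.Ioo (ψ a) (ψ t) := fun x hx =>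
    ⟨hmono (Set.left_mem_Icc.mpr hab.le) (hsub (Set.Ioo_subset_Icc_self hx)) hx.1,
     hmono (hsub (Set.Ioo_subset_Icc_self hx)) hta hx.2⟩
  have hψcc : ContinuousOn ψ (Set.Icc a t) := hψc.mono hsub
  have hdercc : ∀ x ∈ Set.Ioo a t, HasDerivAt ψ (deriv ψ x) x :=
    fun x hx => hder x (hsub (Set.Ioo_subset_Icc_self hx))
  have hmonocc : StrictMonoOn ψ (Set.Icc a t) := hmono.mono hsub
  -- per-l data
  have hepos : ∀ l : ℕ, (0:ℝ) < (l : ℝ) * α + α := by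
    intro l; positivity
  have hem : ∀ l : ℕ, (-1 : ℝ) < (l : ℝ) * α + α - 1 := by
    intro l; linarith [hepos l]
  have hΓ : ∀ l : ℕ, 0 < Real.Gamma ((l : ℝ) * α + α) :=
    fun l => Real.Gamma_pos_of_pos (hepos l)
  have hsubIoo : Set.Ioo a t ⊆ Set.Icc a b := fun x hx => hsub (Set.Ioo_subset_Icc_self hx)
  -- STEP A : change of variables in each summand
  have stepA : ∀ l : ℕ,
      (∫ s in a..t, (((ψ s - ψ a) ^ ((l : ℝ) * α + α - 1) / Real.Gamma ((l : ℝ) * α + α)) *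
          deriv ψ s) • u (ψinv (c - ψ s)))
      = ∫ s in a..t, (((ψ t - ψ s) ^ ((l : ℝ) * α + α - 1) / Real.Gamma ((l : ℝ) * α + α)) *
          deriv ψ s) • u s := by
    intro l
    set e : ℝ := (l : ℝ) * α + α - 1 with hedef
    set Γl : ℝ := Real.Gamma ((l : ℝ) * α + α) with hΓdef
    have heΓ : 0 < Γl := hΓ l
    have he : (-1:ℝ) < e := hem l
    set C1e : ℝ := max (m ^ e) (M1 ^ e) with hC1edef
    have hC1e0 : 0 ≤ C1e := le_trans (Real.rpow_nonneg hm0.le e) (le_max_left _ _)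
    set G : ℝ → (Fin n → ℝ) := fun y => ((y - ψ a) ^ e / Γl) • u (ψinv (c - y)) with hGdef
    set H : ℝ → (Fin n → ℝ) := fun y => ((ψ t - y) ^ e / Γl) • u (ψinv y) with hHdef
    have hGnorm : ∀ y ∈ Set.Icc (ψ a) (ψ t), ‖G y‖ ≤ (Mu / Γl) * (y - ψ a) ^ e := by
      intro y hy
      have hy0 : (0:ℝ) ≤ y - ψ a := by linarith [hy.1]
      have hmem : ψinv (c - y) ∈ Set.Icc a b :=
        hinv_maps _ (Set.Icc_subset_Icc le_rfl hψtb (hrefl_memI y hy))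
      rw [hGdef]
      simp only []
      rw [norm_smul, Real.norm_eq_abs,
        abs_of_nonneg (div_nonneg (Real.rpow_nonneg hy0 e) heΓ.le)]
      calc (y - ψ a) ^ e / Γl * ‖u (ψinv (c - y))‖ ≤ (y - ψ a) ^ e / Γl * Mu := by
            apply mul_le_mul_of_nonneg_left (hMu _ hmem)
              (div_nonneg (Real.rpow_nonneg hy0 e) heΓ.le)
        _ = (Mu / Γl) * (y - ψ a) ^ e := by ring
    have hHnorm : ∀ y ∈ Set.Icc (ψ a) (ψ t), ‖H y‖ ≤ (Mu / Γl) * (ψ t - y) ^ e := by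
      intro y hy
      have hy0 : (0:ℝ) ≤ ψ t - y := by linarith [hy.2]
      have hmem : ψinv y ∈ Set.Icc a b :=
        hinv_maps _ (Set.Icc_subset_Icc le_rfl hψtb hy)
      rw [hHdef]
      simp only []
      rw [norm_smul, Real.norm_eq_abs,
        abs_of_nonneg (div_nonneg (Real.rpow_nonneg hy0 e) heΓ.le)]
      calc (ψ t - y) ^ e / Γl * ‖u (ψinv y)‖ ≤ (ψ t - y) ^ e / Γl * Mu := by
            apply mul_le_mul_of_nonneg_left (hMu _ hmem)
              (div_nonneg (Real.rpow_nonneg hy0 e) heΓ.le)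
        _ = (Mu / Γl) * (ψ t - y) ^ e := by ring
    have hGc : ContinuousOn G (Set.Ioo (ψ a) (ψ t)) := by
      apply ContinuousOn.fun_smul _ hU
      apply ContinuousOn.div_const
      apply ContinuousOn.rpow_const (continuousOn_id.sub continuousOn_const)
      exact fun y hy => Or.inl (ne_of_gt (sub_pos.mpr hy.1))
    have hHc : ContinuousOn H (Set.Ioo (ψ a) (ψ t)) := by
      apply ContinuousOn.fun_smul _ hUt
      apply ContinuousOn.div_const
      apply ContinuousOn.rpow_const (continuousOn_const.sub continuousOn_id)
      exact fun y hy => Or.inl (ne_of_gt (sub_pos.mpr hy.2))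
    have hGi : IntegrableOn G (Set.Icc (ψ a) (ψ t)) := by
      apply integrableOn_of_bound_rpow he (M := Mu / Γl)
      · rw [hmr]
        exact hGc.aestronglyMeasurable measurableSet_Ioo
      · rw [ae_restrict_iff' measurableSet_Icc]
        exact Filter.Eventually.of_forall hGnorm
    have hHi : IntegrableOn H (Set.Icc (ψ a) (ψ t)) := by
      apply integrableOn_of_bound_rpow' he (M := Mu / Γl)
      · rw [hmr]
        exact hHc.aestronglyMeasurable measurableSet_Ioo
      · rw [ae_restrict_iff' measurableSet_Icc]
        exact Filter.Eventually.of_forall hHnorm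
    have hGFi : IntegrableOn (fun x => deriv ψ x • G (ψ x)) (Set.Icc a t) := by
      apply integrableOn_of_bound_rpow he (M := M1 * ((Mu / Γl) * C1e))
      · rw [hmr]
        apply ContinuousOn.aestronglyMeasurable _ measurableSet_Ioo
        exact (hdc.mono hsubIoo).smul (hGc.comp (hψc.mono hsubIoo) hψIoo)
      · rw [hmr, ae_restrict_iff' measurableSet_Ioo]
        apply Filter.Eventually.of_forall
        intro x hx
        have hxm : x ∈ Set.Icc a b := hsubIoo hx
        have hd0 : 0 < deriv ψ x := hψ' x hxm
        have hxa : 0 < x - a := by linarith [hx.1]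
        have hg1 : m * (x - a) ≤ ψ x - ψ a := hgrow a (Set.left_mem_Icc.mpr hab.le) x hxm hx.1.le
        have hg2 : ψ x - ψ a ≤ M1 * (x - a) := hgrow2 a (Set.left_mem_Icc.mpr hab.le) x hxm hx.1.le
        have hrb : (ψ x - ψ a) ^ e ≤ C1e * (x - a) ^ e := hC1 e _ _ hxa hg1 hg2
        have hGn := hGnorm (ψ x) (Set.Ioo_subset_Icc_self (hψIoo x hx))
        rw [norm_smul, Real.norm_eq_abs, abs_of_pos hd0]
        calc deriv ψ x * ‖G (ψ x)‖ ≤ M1 * ((Mu / Γl) * (ψ x - ψ a) ^ e) := by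
              apply mul_le_mul (hhigh x hxm) hGn (norm_nonneg _) hM10.le
          _ ≤ M1 * ((Mu / Γl) * (C1e * (x - a) ^ e)) := by
              apply mul_le_mul_of_nonneg_left _ hM10.le
              apply mul_le_mul_of_nonneg_left _ (div_nonneg hMu0 heΓ.le)
              calc (ψ x - ψ a) ^ e ≤ C1e * (x - a) ^ e := hrb
                _ = C1e * (x - a) ^ e := rfl
          _ = M1 * ((Mu / Γl) * C1e) * (x - a) ^ e := by ring
    have hHFi : IntegrableOn (fun x => deriv ψ x • H (ψ x)) (Set.Icc a t) := by
      apply integrableOn_of_bound_rpow' he (M := M1 * ((Mu / Γl) * C1e))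
      · rw [hmr]
        apply ContinuousOn.aestronglyMeasurable _ measurableSet_Ioo
        exact (hdc.mono hsubIoo).smul (hHc.comp (hψc.mono hsubIoo) hψIoo)
      · rw [hmr, ae_restrict_iff' measurableSet_Ioo]
        apply Filter.Eventually.of_forall
        intro x hx
        have hxm : x ∈ Set.Icc a b := hsubIoo hx
        have hd0 : 0 < deriv ψ x := hψ' x hxm
        have hxa : 0 < t - x := by linarith [hx.2]
        have hg1 : m * (t - x) ≤ ψ t - ψ x := hgrow x hxm t hta hx.2.le
        have hg2 : ψ t - ψ x ≤ M1 * (t - x) := hgrow2 x hxm t hta hx.2.le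
        have hrb : (ψ t - ψ x) ^ e ≤ C1e * (t - x) ^ e := hC1 e _ _ hxa hg1 hg2
        have hHn := hHnorm (ψ x) (Set.Ioo_subset_Icc_self (hψIoo x hx))
        rw [norm_smul, Real.norm_eq_abs, abs_of_pos hd0]
        calc deriv ψ x * ‖H (ψ x)‖ ≤ M1 * ((Mu / Γl) * (ψ t - ψ x) ^ e) := by
              apply mul_le_mul (hhigh x hxm) hHn (norm_nonneg _) hM10.le
          _ ≤ M1 * ((Mu / Γl) * (C1e * (t - x) ^ e)) := by
              apply mul_le_mul_of_nonneg_left _ hM10.le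
              exact mul_le_mul_of_nonneg_left hrb (div_nonneg hMu0 heΓ.le)
          _ = M1 * ((Mu / Γl) * C1e) * (t - x) ^ e := by ring
    calc (∫ s in a..t, (((ψ s - ψ a) ^ e / Γl) * deriv ψ s) • u (ψinv (c - ψ s)))
        = ∫ x in a..t, deriv ψ x • G (ψ x) := by
          apply intervalIntegral.integral_congr
          intro s _
          rw [hGdef]
          simp only []
          rw [smul_smul, mul_comm]
      _ = ∫ y in ψ a..ψ t, G y := subst_lemma hat hψcc hdercc hmonocc hGc hGi hGFi
      _ = ∫ y in ψ a..ψ t, H y := by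
          have hHG : ∀ y : ℝ, H y = G (c - y) := by
            intro y
            rw [hGdef, hHdef]
            simp only []
            rw [show c - y - ψ a = ψ t - y by rw [hcdef]; ring,
              show c - (c - y) = y by ring]
          calc ∫ y in ψ a..ψ t, G y = ∫ y in c - ψ t..c - ψ a, G y := by
                rw [show c - ψ t = ψ a by rw [hcdef]; ring,
                  show c - ψ a = ψ t by rw [hcdef]; ring]
            _ = ∫ y in ψ a..ψ t, G (c - y) :=
                (intervalIntegral.integral_comp_sub_left G c).symm
            _ = ∫ y in ψ a..ψ t, H y :=
                intervalIntegral.integral_congr (fun y _ => (hHG y).symm)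
      _ = ∫ x in a..t, deriv ψ x • H (ψ x) :=
          (subst_lemma hat hψcc hdercc hmonocc hHc hHi hHFi).symm
      _ = ∫ s in a..t, (((ψ t - ψ s) ^ e / Γl) * deriv ψ s) • u s := by
          apply intervalIntegral.integral_congr
          intro s hs
          rw [Set.uIcc_of_le hat.le] at hs
          rw [hHdef]
          simp only []
          rw [hinv s (hsub hs), smul_smul, mul_comm]
  -- kernel integrability (generic in the vector factor)
  have hKint : ∀ (l : ℕ) (w : ℝ → Fin n → ℝ), ContinuousOn w (Set.Ioo a t) →
      ∀ W : ℝ, (∀ s ∈ Set.Icc a b, ‖w s‖ ≤ W) →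
      IntegrableOn (fun s => (((ψ t - ψ s) ^ ((l:ℝ) * α + α - 1) /
        Real.Gamma ((l:ℝ) * α + α)) * deriv ψ s) • w s) (Set.Icc a t) := by
    intro l w hwc W hW
    have hW0 : 0 ≤ W := le_trans (norm_nonneg (w a)) (hW a (Set.left_mem_Icc.mpr hab.le))
    set e : ℝ := (l : ℝ) * α + α - 1 with hedef
    set Γl : ℝ := Real.Gamma ((l : ℝ) * α + α) with hΓdef
    have heΓ : 0 < Γl := hΓ l
    have he : (-1:ℝ) < e := hem l
    set C1e : ℝ := max (m ^ e) (M1 ^ e) with hC1edef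
    have hC1e0 : 0 ≤ C1e := le_trans (Real.rpow_nonneg hm0.le e) (le_max_left _ _)
    apply integrableOn_of_bound_rpow' he (M := W * M1 * C1e / Γl)
    · rw [hmr]
      apply ContinuousOn.aestronglyMeasurable _ measurableSet_Ioo
      apply ContinuousOn.fun_smul _ hwc
      apply ContinuousOn.mul _ (hdc.mono hsubIoo)
      apply ContinuousOn.div_const
      apply ContinuousOn.rpow_const (continuousOn_const.sub (hψc.mono hsubIoo))
      exact fun x hx => Or.inl (ne_of_gt (sub_pos.mpr (hψIoo x hx).2))
    · rw [hmr, ae_restrict_iff' measurableSet_Ioo]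
      apply Filter.Eventually.of_forall
      intro x hx
      have hxm : x ∈ Set.Icc a b := hsubIoo hx
      have hd0 : 0 < deriv ψ x := hψ' x hxm
      have hxa : 0 < t - x := by linarith [hx.2]
      have hX0 : (0:ℝ) ≤ ψ t - ψ x := by linarith [(hψIoo x hx).2]
      have hrb : (ψ t - ψ x) ^ e ≤ C1e * (t - x) ^ e :=
        hC1 e _ _ hxa (hgrow x hxm t hta hx.2.le) (hgrow2 x hxm t hta hx.2.le)
      rw [norm_smul, Real.norm_eq_abs,
        abs_of_nonneg (mul_nonneg (div_nonneg (Real.rpow_nonneg hX0 e) heΓ.le) hd0.le)]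
      calc (ψ t - ψ x) ^ e / Γl * deriv ψ x * ‖w x‖
          ≤ (ψ t - ψ x) ^ e / Γl * deriv ψ x * W := by
            apply mul_le_mul_of_nonneg_left (hW x hxm)
              (mul_nonneg (div_nonneg (Real.rpow_nonneg hX0 e) heΓ.le) hd0.le)
        _ ≤ (C1e * (t - x) ^ e) / Γl * M1 * W := by
            apply mul_le_mul_of_nonneg_right _ hW0
            apply mul_le_mul ((div_le_div_iff_of_pos_right heΓ).mpr hrb) (hhigh x hxm) hd0.le
              (by positivity)
        _ = W * M1 * C1e / Γl * (t - x) ^ e := by ring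
  -- value of the scalar kernel integral
  have hVal : ∀ l : ℕ,
      IntegrableOn (fun s => deriv ψ s • ((ψ t - ψ s) ^ ((l:ℝ) * α + α - 1))) (Set.Icc a t) ∧
      (∫ s in a..t, deriv ψ s • ((ψ t - ψ s) ^ ((l:ℝ) * α + α - 1)))
        = (ψ t - ψ a) ^ ((l:ℝ) * α + α) / ((l:ℝ) * α + α) := by
    intro l
    set e : ℝ := (l : ℝ) * α + α - 1 with hedef
    have he : (-1:ℝ) < e := hem l
    set C1e : ℝ := max (m ^ e) (M1 ^ e) with hC1edef
    have hC1e0 : 0 ≤ C1e := le_trans (Real.rpow_nonneg hm0.le e) (le_max_left _ _)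
    set G0 : ℝ → ℝ := fun y => (ψ t - y) ^ e with hG0def
    have hG0c : ContinuousOn G0 (Set.Ioo (ψ a) (ψ t)) := by
      apply ContinuousOn.rpow_const (continuousOn_const.sub continuousOn_id)
      exact fun y hy => Or.inl (ne_of_gt (sub_pos.mpr hy.2))
    have hG0i : IntegrableOn G0 (Set.Icc (ψ a) (ψ t)) := by
      apply integrableOn_of_bound_rpow' he (M := 1)
      · rw [hmr]
        exact hG0c.aestronglyMeasurable measurableSet_Ioo
      · rw [ae_restrict_iff' measurableSet_Icc]
        apply Filter.Eventually.of_forall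
        intro y hy
        rw [hG0def]
        simp only []
        rw [Real.norm_eq_abs, abs_of_nonneg (Real.rpow_nonneg (by linarith [hy.2]) e), one_mul]
    have hG0Fi : IntegrableOn (fun x => deriv ψ x • G0 (ψ x)) (Set.Icc a t) := by
      apply integrableOn_of_bound_rpow' he (M := M1 * C1e)
      · rw [hmr]
        apply ContinuousOn.aestronglyMeasurable _ measurableSet_Ioo
        exact (hdc.mono hsubIoo).smul (hG0c.comp (hψc.mono hsubIoo) hψIoo)
      · rw [hmr, ae_restrict_iff' measurableSet_Ioo]
        apply Filter.Eventually.of_forall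
        intro x hx
        have hxm : x ∈ Set.Icc a b := hsubIoo hx
        have hd0 : 0 < deriv ψ x := hψ' x hxm
        have hxa : 0 < t - x := by linarith [hx.2]
        have hX0 : (0:ℝ) ≤ ψ t - ψ x := by linarith [(hψIoo x hx).2]
        have hrb : (ψ t - ψ x) ^ e ≤ C1e * (t - x) ^ e :=
          hC1 e _ _ hxa (hgrow x hxm t hta hx.2.le) (hgrow2 x hxm t hta hx.2.le)
        rw [smul_eq_mul, Real.norm_eq_abs, hG0def]
        simp only []
        rw [abs_of_nonneg (mul_nonneg hd0.le (Real.rpow_nonneg hX0 e))]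
        calc deriv ψ x * (ψ t - ψ x) ^ e ≤ M1 * (C1e * (t - x) ^ e) :=
              mul_le_mul (hhigh x hxm) hrb (Real.rpow_nonneg hX0 e) hM10.le
          _ = M1 * C1e * (t - x) ^ e := by ring
    refine ⟨hG0Fi, ?_⟩
    rw [subst_lemma hat hψcc hdercc hmonocc hG0c hG0i hG0Fi]
    have h1 : (∫ y in ψ a..ψ t, G0 y) = ∫ z in ψ t - ψ t..ψ t - ψ a, z ^ e :=
      intervalIntegral.integral_comp_sub_left (fun z => z ^ e) (ψ t)
    rw [h1, sub_self]
    rw [integral_rpow (Or.inl he)]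
    have he1 : e + 1 = (l:ℝ) * α + α := by rw [hedef]; ring
    rw [he1, Real.zero_rpow (ne_of_gt (hepos l))]
    ring_nf
  -- the series terms
  set F : ℕ → ℝ → (Fin n → ℝ) := fun l s =>
    (((ψ t - ψ s) ^ ((l:ℝ) * α + α - 1) / Real.Gamma ((l:ℝ) * α + α)) * deriv ψ s) •
      (A ^ l).mulVec (u s) with hFdef
  have hmulVec_bound : ∀ (l : ℕ) (s : ℝ), s ∈ Set.Icc a b →
      ‖(A ^ l).mulVec (u s)‖ ≤ CA ^ l * Mu := by
    intro l s hs
    calc ‖(A ^ l).mulVec (u s)‖ ≤ ‖opCLM A‖ ^ l * ‖u s‖ := mulVec_pow_norm_le A l (u s)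
      _ ≤ CA ^ l * Mu := by
          rw [← hCA]
          exact mul_le_mul_of_nonneg_left (hMu s hs) (pow_nonneg hCA0 l)
  have hwcont : ∀ l : ℕ, ContinuousOn (fun s => (A ^ l).mulVec (u s)) (Set.Ioo a t) :=
    fun l => (opCLM (A ^ l)).continuous.comp_continuousOn (hu.mono hsubIoo)
  have hFint : ∀ l : ℕ, Integrable (F l) (volume.restrict (Set.Ioc a t)) := fun l =>
    (hKint l _ (hwcont l) (CA ^ l * Mu) (fun s hs => hmulVec_bound l s hs)).mono_set
      Set.Ioc_subset_Icc_self
  have hJint : ∀ l : ℕ, Integrable (fun s =>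
      (((ψ t - ψ s) ^ ((l:ℝ) * α + α - 1) / Real.Gamma ((l:ℝ) * α + α)) * deriv ψ s) • u s)
      (volume.restrict (Set.Ioc a t)) := fun l =>
    (hKint l u (hu.mono hsubIoo) Mu hMu).mono_set Set.Ioc_subset_Icc_self
  -- STEP B : pull the matrix inside the integral
  have stepB : ∀ l : ℕ,
      (A ^ l).mulVec (∫ s in a..t,
        (((ψ t - ψ s) ^ ((l:ℝ) * α + α - 1) / Real.Gamma ((l:ℝ) * α + α)) * deriv ψ s) • u s)
      = ∫ s in Set.Ioc a t, F l s := by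
    intro l
    rw [intervalIntegral.integral_of_le hat.le, ← opCLM_apply,
      ← (opCLM (A ^ l)).integral_comp_comm (hJint l)]
    apply MeasureTheory.integral_congr_ae
    apply Filter.Eventually.of_forall
    intro s
    show opCLM (A ^ l) (_ • u s) = F l s
    rw [(opCLM (A ^ l)).map_smul, opCLM_apply]
  -- summability of the integrals of norms
  have hXpos : (0:ℝ) < ψ t - ψ a := sub_pos.mpr hψat
  have hFsum : Summable (fun l : ℕ => ∫ s in Set.Ioc a t, ‖F l s‖) := by
    have hD0 : 0 ≤ CA * (ψ t - ψ a) ^ α := mul_nonneg hCA0 (Real.rpow_nonneg hXpos.le α)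
    apply Summable.of_nonneg_of_le (fun l => integral_nonneg (fun s => norm_nonneg _)) _
      ((gamma_summable hα0 (by linarith : (0:ℝ) < α + 1) hD0).mul_left
        (Mu * (ψ t - ψ a) ^ α))
    intro l
    set Γl : ℝ := Real.Gamma ((l:ℝ) * α + α) with hΓldef
    have heΓ : 0 < Γl := hΓ l
    have hmaj : Integrable (fun s => (CA ^ l * Mu / Γl) *
        (deriv ψ s • ((ψ t - ψ s) ^ ((l:ℝ) * α + α - 1))))
        (volume.restrict (Set.Ioc a t)) :=
      (((hVal l).1).mono_set Set.Ioc_subset_Icc_self).const_mul _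
    have h1 : (∫ s in Set.Ioc a t, ‖F l s‖) ≤ ∫ s in Set.Ioc a t,
        (CA ^ l * Mu / Γl) * (deriv ψ s • ((ψ t - ψ s) ^ ((l:ℝ) * α + α - 1))) := by
      apply integral_mono_of_nonneg (Filter.Eventually.of_forall fun s => norm_nonneg _) hmaj
      show ∀ᵐ s ∂(volume.restrict (Set.Ioc a t)), ‖F l s‖ ≤ _
      rw [ae_restrict_iff' measurableSet_Ioc]
      apply Filter.Eventually.of_forall
      intro s hs
      have hsm : s ∈ Set.Icc a b := hsub (Set.Ioc_subset_Icc_self hs)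
      have hd0 : 0 < deriv ψ s := hψ' s hsm
      have hX0 : (0:ℝ) ≤ ψ t - ψ s := by
        have := hmono.monotoneOn hsm hta hs.2
        linarith
      have hq0 : (0:ℝ) ≤ (ψ t - ψ s) ^ ((l:ℝ) * α + α - 1) / Γl * deriv ψ s :=
        mul_nonneg (div_nonneg (Real.rpow_nonneg hX0 _) heΓ.le) hd0.le
      rw [hFdef]
      simp only []
      rw [norm_smul, Real.norm_eq_abs, abs_of_nonneg hq0]
      calc (ψ t - ψ s) ^ ((l:ℝ) * α + α - 1) / Γl * deriv ψ s * ‖(A ^ l).mulVec (u s)‖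
          ≤ (ψ t - ψ s) ^ ((l:ℝ) * α + α - 1) / Γl * deriv ψ s * (CA ^ l * Mu) :=
            mul_le_mul_of_nonneg_left (hmulVec_bound l s hsm) hq0
        _ = (CA ^ l * Mu / Γl) * (deriv ψ s • ((ψ t - ψ s) ^ ((l:ℝ) * α + α - 1))) := by
            rw [smul_eq_mul]; ring
    have h2 : (∫ s in Set.Ioc a t,
        (CA ^ l * Mu / Γl) * (deriv ψ s • ((ψ t - ψ s) ^ ((l:ℝ) * α + α - 1))))
        = (CA ^ l * Mu / Γl) * ((ψ t - ψ a) ^ ((l:ℝ) * α + α) / ((l:ℝ) * α + α)) := by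
      rw [MeasureTheory.integral_const_mul, ← intervalIntegral.integral_of_le hat.le, (hVal l).2]
    have h3 : (CA ^ l * Mu / Γl) * ((ψ t - ψ a) ^ ((l:ℝ) * α + α) / ((l:ℝ) * α + α))
        = Mu * (ψ t - ψ a) ^ α *
          ((CA * (ψ t - ψ a) ^ α) ^ l / Real.Gamma (α * (l:ℝ) + (α + 1))) := by
      have hΓ1 : Real.Gamma (α * (l:ℝ) + (α + 1)) = ((l:ℝ) * α + α) * Γl := by
        rw [show α * (l:ℝ) + (α + 1) = ((l:ℝ) * α + α) + 1 by ring,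
          Real.Gamma_add_one (ne_of_gt (hepos l)), hΓldef]
      have hXsplit : (ψ t - ψ a) ^ ((l:ℝ) * α + α)
          = ((ψ t - ψ a) ^ α) ^ l * (ψ t - ψ a) ^ α := by
        rw [← Real.rpow_natCast ((ψ t - ψ a) ^ α) l, ← Real.rpow_mul hXpos.le,
          ← Real.rpow_add hXpos]
        congr 1; ring
      rw [hΓ1, hXsplit, mul_pow]
      have h4 : Γl ≠ 0 := heΓ.ne'
      have h5 : ((l:ℝ) * α + α) ≠ 0 := (hepos l).ne'
      field_simp
    rw [← h3, ← h2]
    exact h1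
  -- interchange sum and integral
  have hswap := MeasureTheory.integral_tsum_of_summable_integral_norm hFint hFsum
  -- a.e. identity of integrands
  have hne : ∀ᵐ x : ℝ, x ≠ t := by
    rw [ae_iff]
    convert Real.volume_singleton (a := t) using 2
    ext x; simp
  calc (∑' l : ℕ, (A ^ l).mulVec
        (∫ s in a..t,
          (((ψ s - ψ a) ^ ((l : ℝ) * α + α - 1) / Real.Gamma ((l : ℝ) * α + α)) *
              deriv ψ s) • u (ψinv (c - ψ s))))
      = ∑' l : ℕ, ∫ s in Set.Ioc a t, F l s := by
        apply tsum_congr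
        intro l
        rw [stepA l]
        exact stepB l
    _ = ∫ s in Set.Ioc a t, ∑' l : ℕ, F l s := hswap
    _ = ∫ s in Set.Ioc a t,
          (deriv ψ s * (ψ t - ψ s) ^ (α - 1)) •
            (mlMatrix α α (((ψ t - ψ s) ^ α) • A)).mulVec (u s) := by
        apply setIntegral_congr_ae measurableSet_Ioc
        filter_upwards [hne] with s hsne hs
        have hsIoo : s ∈ Set.Ioo a t := ⟨hs.1, lt_of_le_of_ne hs.2 hsne⟩
        have hX : (0:ℝ) < ψ t - ψ s := sub_pos.mpr (hψIoo s hsIoo).2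
        rw [mlMatrix_mulVec hα0 hα0,
          ← Summable.tsum_const_smul _ (mulVec_vec_summable hα0 hα0 (((ψ t - ψ s) ^ α) • A) (u s))]
        apply tsum_congr
        intro l
        simp only [hFdef]
        rw [smul_pow, Matrix.smul_mulVec, smul_smul, smul_smul]
        congr 1
        have hXl : (((ψ t - ψ s) ^ α : ℝ)) ^ l = (ψ t - ψ s) ^ (α * l) := by
          rw [← Real.rpow_natCast ((ψ t - ψ s) ^ α) l, ← Real.rpow_mul hX.le]
        rw [hXl, mul_comm α ((l:ℝ))]
        have h2 : (ψ t - ψ s) ^ ((l:ℝ) * α + α - 1)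
            = (ψ t - ψ s) ^ (α - 1) * (ψ t - ψ s) ^ ((l:ℝ) * α) := by
          rw [← Real.rpow_add hX]
          congr 1; ring
        rw [h2]
        ring
    _ = ∫ s in a..t,
          (deriv ψ s * (ψ t - ψ s) ^ (α - 1)) •
            (mlMatrix α α (((ψ t - ψ s) ^ α) • A)).mulVec (u s) :=
        (intervalIntegral.integral_of_le hat.le).symm
end
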